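/- arXiv:2102.01038 — 4 statements merged into one kernel-verified Lean document; each statement's English description precedes it below -/
import Mathlib

section
/- Let τ = (x_l, x_r), γ ∈ τ, and let w_τ(x) = I_h^1 w*(x) − w*(x) where w*(x) = |x − γ| and I_h^1 w* is the affine function on [x_l, x_r] agreeing with w* at x_l and x_r. Given v ∈ C([x_l, x_r]), let I v be the unique continuous function on [x_l, x_r] which is a polynomial of degree p on [x_l, γ] and on [γ, x_r] and interpolates v at the nodes ξ_i = x_l + i(γ−x_l)/p and ξ_{p+1+i} = γ + i(x_r−γ)/p, i = 0,…,p. Then there exist unique real coefficients α_1,…,α_{p+1} and β_1,…,β_{p+1} such that I v(x) = Σ_{j=1}^{p+1} (α_j + β_j w_τ(x)) φ_j(x) for all x ∈ [x_l, x_r], where {φ_j} is the nodal Lagrange basis of degree p on [x_l, x_r]. -/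
open Polynomial

private lemma poly_eq_of_eval_eq_on {a b : ℝ} (hab : a < b) (f g : Polynomial ℝ)
    (h : ∀ x ∈ Set.Icc a b, f.eval x = g.eval x) : f = g := by
  have hz : f - g = 0 := by
    apply Polynomial.eq_zero_of_infinite_isRoot
    refine (Set.Icc_infinite hab).mono ?_
    intro x hx
    simp only [Set.mem_setOf_eq, Polynomial.IsRoot, Polynomial.eval_sub, sub_eq_zero]
    try exact h x hx
  exact sub_eq_zero.mp hz

/-- existence and uniqueness of the coefficients `α_j, β_j` representing the
piecewise polynomial interpolant `I v` of a continuous function `v` on an element containing an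
interface `γ`, in terms of the Lagrange basis `φ_j` and the SGFEM enrichment function
`w_τ = I_h^1 w* − w*`, `w*(x) = |x − γ|`. -/
theorem stmt1 (p : ℕ) (hp : 1 ≤ p) (xl xr γ : ℝ) (hlr : xl < xr) (hγ : γ ∈ Set.Ioo xl xr)
    (v Iv : ℝ → ℝ) (hv : ContinuousOn v (Set.Icc xl xr))
    (hIvcont : ContinuousOn Iv (Set.Icc xl xr))
    (R₁ R₂ : Polynomial ℝ) (hdeg₁ : R₁.natDegree ≤ p) (hdeg₂ : R₂.natDegree ≤ p)
    (hIv₁ : ∀ x ∈ Set.Icc xl γ, Iv x = R₁.eval x)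
    (hIv₂ : ∀ x ∈ Set.Icc γ xr, Iv x = R₂.eval x)
    (hint₁ : ∀ i : ℕ, i ≤ p → Iv (xl + i * (γ - xl) / p) = v (xl + i * (γ - xl) / p))
    (hint₂ : ∀ i : ℕ, i ≤ p → Iv (γ + i * (xr - γ) / p) = v (γ + i * (xr - γ) / p)) :
    ∃! c : (Fin (p + 1) → ℝ) × (Fin (p + 1) → ℝ),
      ∀ x ∈ Set.Icc xl xr,
        Iv x = ∑ j : Fin (p + 1),
          (c.1 j + c.2 j *
              ((γ - xl) + (x - xl) * ((xr - γ) - (γ - xl)) / (xr - xl) - |x - γ|)) *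
            (Lagrange.basis Finset.univ
              (fun k : Fin (p + 1) => xl + (k : ℕ) * (xr - xl) / p) j).eval x := by
  obtain ⟨hxlγ, hγxr⟩ := hγ
  have hpR : (0:ℝ) < (p:ℝ) := by exact_mod_cast Nat.lt_of_lt_of_le Nat.zero_lt_one hp
  have hxx : (0:ℝ) < xr - xl := sub_pos.mpr hlr
  set t : Fin (p + 1) → ℝ := fun k : Fin (p + 1) => xl + (k : ℕ) * (xr - xl) / p with htdef
  -- injectivity of nodes
  have htinj : Set.InjOn t (Finset.univ : Finset (Fin (p+1))) := by
    intro a _ b _ hab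
    have h1 : ((a:ℕ):ℝ) * (xr - xl) / p = ((b:ℕ):ℝ) * (xr - xl) / p := by
      simpa [htdef] using hab
    have h2 : ((a:ℕ):ℝ) = ((b:ℕ):ℝ) := by
      have hne : (xr - xl) / p ≠ 0 := (div_pos hxx hpR).ne'
      rw [mul_div_assoc, mul_div_assoc] at h1
      exact mul_right_cancel₀ hne h1
    exact Fin.ext (by exact_mod_cast h2)
  -- degree bound helper
  have hdlt : ∀ f : Polynomial ℝ, f.natDegree ≤ p →
      f.degree < ((Finset.univ : Finset (Fin (p+1))).card : WithBot ℕ) := by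
    intro f hf
    have hc : ((Finset.univ : Finset (Fin (p+1))).card) = p + 1 := by simp
    rw [hc]
    calc f.degree ≤ (f.natDegree : WithBot ℕ) := Polynomial.degree_le_natDegree
      _ ≤ (p : WithBot ℕ) := by exact_mod_cast hf
      _ < ((p+1 : ℕ) : WithBot ℕ) := by exact_mod_cast Nat.lt_succ_self p
  -- sum-of-basis representation of a polynomial of degree ≤ p
  have hsum : ∀ f : Polynomial ℝ, f.natDegree ≤ p → ∀ x : ℝ,
      (∑ j : Fin (p+1), f.eval (t j) * (Lagrange.basis Finset.univ t j).eval x) = f.eval x := by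
    intro f hf x
    have h := Lagrange.eq_interpolate htinj (hdlt f hf)
    conv_rhs => rw [h]
    rw [Lagrange.interpolate_apply, Polynomial.eval_finset_sum]
    exact Finset.sum_congr rfl fun j _ => by rw [Polynomial.eval_mul, Polynomial.eval_C]
  -- the linear interpolant polynomial
  set L : Polynomial ℝ :=
    Polynomial.C (γ - xl) + (Polynomial.X - Polynomial.C xl) *
      Polynomial.C (((xr - γ) - (γ - xl)) / (xr - xl)) with hLdef
  have hLnd : L.natDegree ≤ 1 := by
    rw [hLdef]; compute_degree
  have hLeval : ∀ x : ℝ,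
      L.eval x = (γ - xl) + (x - xl) * ((xr - γ) - (γ - xl)) / (xr - xl) := by
    intro x
    simp only [hLdef, Polynomial.eval_add, Polynomial.eval_mul, Polynomial.eval_sub,
      Polynomial.eval_C, Polynomial.eval_X]
    try ring
  -- continuity at γ
  have hγeq : R₁.eval γ = R₂.eval γ := by
    rw [← hIv₁ γ ⟨hxlγ.le, le_refl γ⟩, hIv₂ γ ⟨le_refl γ, hγxr.le⟩]
  have hroot : (R₁ - R₂).IsRoot γ := by
    simp [Polynomial.IsRoot, hγeq]
  set Q : Polynomial ℝ := (R₁ - R₂) /ₘ (Polynomial.X - Polynomial.C γ) with hQdef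
  have hQ : (Polynomial.X - Polynomial.C γ) * Q = R₁ - R₂ :=
    Polynomial.mul_divByMonic_eq_iff_isRoot.mpr hroot
  set B : Polynomial ℝ := Polynomial.C (2⁻¹ : ℝ) * Q with hBdef
  set A : Polynomial ℝ := Polynomial.C (2⁻¹ : ℝ) * (R₁ + R₂) - B * L with hAdef
  have hhalf : Polynomial.C (2⁻¹ : ℝ) * 2 = (1 : Polynomial ℝ) := by
    rw [show (2 : Polynomial ℝ) = Polynomial.C (2 : ℝ) from by
      rw [← map_ofNat (Polynomial.C : ℝ →+* Polynomial ℝ) 2], ← Polynomial.C_mul]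
    norm_num
  have hXB : (Polynomial.X - Polynomial.C γ) * B = Polynomial.C (2⁻¹ : ℝ) * (R₁ - R₂) := by
    rw [hBdef, mul_left_comm, hQ]
  have hP1 : A + (L + (Polynomial.X - Polynomial.C γ)) * B = R₁ := by
    linear_combination hAdef + hXB + R₁ * hhalf
  have hP2 : A + (L - (Polynomial.X - Polynomial.C γ)) * B = R₂ := by
    linear_combination hAdef - hXB + R₂ * hhalf
  -- degree bounds
  have hQnd : Q.natDegree ≤ p - 1 := by
    rw [hQdef, Polynomial.natDegree_divByMonic _ (Polynomial.monic_X_sub_C γ)]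
    have : (R₁ - R₂).natDegree ≤ p :=
      le_trans (Polynomial.natDegree_sub_le _ _) (max_le hdeg₁ hdeg₂)
    have hx : (Polynomial.X - Polynomial.C γ).natDegree = 1 := Polynomial.natDegree_X_sub_C γ
    omega
  have hBnd : B.natDegree ≤ p - 1 := by
    calc B.natDegree ≤ (Polynomial.C (2⁻¹:ℝ)).natDegree + Q.natDegree :=
          hBdef ▸ Polynomial.natDegree_mul_le
      _ ≤ p - 1 := by simpa using hQnd
  have hBnd' : B.natDegree ≤ p := le_trans hBnd (Nat.sub_le p 1)
  have hAnd : A.natDegree ≤ p := by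
    rw [hAdef]
    refine le_trans (Polynomial.natDegree_sub_le _ _) (max_le ?_ ?_)
    · calc (Polynomial.C (2⁻¹:ℝ) * (R₁ + R₂)).natDegree
          ≤ (Polynomial.C (2⁻¹:ℝ)).natDegree + (R₁ + R₂).natDegree :=
            Polynomial.natDegree_mul_le
        _ ≤ p := by
            have : (R₁ + R₂).natDegree ≤ p :=
              le_trans (Polynomial.natDegree_add_le _ _) (max_le hdeg₁ hdeg₂)
            simpa using this
    · calc (B * L).natDegree ≤ B.natDegree + L.natDegree := Polynomial.natDegree_mul_le
        _ ≤ (p - 1) + 1 := add_le_add hBnd hLnd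
        _ ≤ p := by omega
  -- the enrichment value
  have hWleft : ∀ x : ℝ, x ≤ γ →
      (γ - xl) + (x - xl) * ((xr - γ) - (γ - xl)) / (xr - xl) - |x - γ| =
        L.eval x + (x - γ) := by
    intro x hx
    rw [abs_of_nonpos (by linarith), hLeval]; try ring
  have hWright : ∀ x : ℝ, γ ≤ x →
      (γ - xl) + (x - xl) * ((xr - γ) - (γ - xl)) / (xr - xl) - |x - γ| =
        L.eval x - (x - γ) := by
    intro x hx
    rw [abs_of_nonneg (by linarith), hLeval]; try ring
  -- splitting the sum
  have hsplit : ∀ (c₁ c₂ : Fin (p+1) → ℝ) (x W : ℝ),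
      (∑ j : Fin (p+1), (c₁ j + c₂ j * W) * (Lagrange.basis Finset.univ t j).eval x) =
      (∑ j : Fin (p+1), c₁ j * (Lagrange.basis Finset.univ t j).eval x) +
        W * (∑ j : Fin (p+1), c₂ j * (Lagrange.basis Finset.univ t j).eval x) := by
    intro c₁ c₂ x W
    rw [Finset.mul_sum, ← Finset.sum_add_distrib]
    exact Finset.sum_congr rfl fun j _ => by try ring
  refine ⟨⟨fun j => A.eval (t j), fun j => B.eval (t j)⟩, ?_, ?_⟩
  · -- existence
    intro x hx
    rw [hsplit, hsum A hAnd x, hsum B hBnd' x]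
    rcases le_total x γ with hcase | hcase
    · rw [hWleft x hcase, hIv₁ x ⟨hx.1, hcase⟩, ← hP1]
      simp only [Polynomial.eval_add, Polynomial.eval_mul, Polynomial.eval_sub,
        Polynomial.eval_C, Polynomial.eval_X]
      try ring
    · rw [hWright x hcase, hIv₂ x ⟨hcase, hx.2⟩, ← hP2]
      simp only [Polynomial.eval_add, Polynomial.eval_mul, Polynomial.eval_sub,
        Polynomial.eval_C, Polynomial.eval_X]
      try ring
  · -- uniqueness
    rintro ⟨c₁, c₂⟩ hc
    set A' : Polynomial ℝ := Lagrange.interpolate Finset.univ t c₁ with hA'def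
    set B' : Polynomial ℝ := Lagrange.interpolate Finset.univ t c₂ with hB'def
    have hA'e : ∀ x : ℝ, A'.eval x =
        ∑ j : Fin (p+1), c₁ j * (Lagrange.basis Finset.univ t j).eval x := by
      intro x
      rw [hA'def, Lagrange.interpolate_apply, Polynomial.eval_finset_sum]
      exact Finset.sum_congr rfl fun j _ => by rw [Polynomial.eval_mul, Polynomial.eval_C]
    have hB'e : ∀ x : ℝ, B'.eval x =
        ∑ j : Fin (p+1), c₂ j * (Lagrange.basis Finset.univ t j).eval x := by
      intro x
      rw [hB'def, Lagrange.interpolate_apply, Polynomial.eval_finset_sum]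
      exact Finset.sum_congr rfl fun j _ => by rw [Polynomial.eval_mul, Polynomial.eval_C]
    have e₁ : A' + (L + (Polynomial.X - Polynomial.C γ)) * B' = R₁ := by
      apply poly_eq_of_eval_eq_on hxlγ
      intro x hx
      have hx' : x ∈ Set.Icc xl xr := ⟨hx.1, le_trans hx.2 hγxr.le⟩
      have := hc x hx'
      rw [hsplit, ← hA'e, ← hB'e, hWleft x hx.2] at this
      rw [← hIv₁ x hx]
      simp only [Polynomial.eval_add, Polynomial.eval_mul, Polynomial.eval_sub,
        Polynomial.eval_C, Polynomial.eval_X]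
      rw [this]; try ring
    have e₂ : A' + (L - (Polynomial.X - Polynomial.C γ)) * B' = R₂ := by
      apply poly_eq_of_eval_eq_on hγxr
      intro x hx
      have hx' : x ∈ Set.Icc xl xr := ⟨le_trans hxlγ.le hx.1, hx.2⟩
      have := hc x hx'
      rw [hsplit, ← hA'e, ← hB'e, hWright x hx.1] at this
      rw [← hIv₂ x hx]
      simp only [Polynomial.eval_add, Polynomial.eval_mul, Polynomial.eval_sub,
        Polynomial.eval_C, Polynomial.eval_X]
      rw [this]; try ring
    have hBeq : B' = B := by
      have hcan : (Polynomial.X - Polynomial.C γ) * (2 * B') =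
          (Polynomial.X - Polynomial.C γ) * (2 * B) := by
        linear_combination e₁ - e₂ - 2 * hXB - (R₁ - R₂) * hhalf
      have h2 := mul_left_cancel₀ (Polynomial.X_sub_C_ne_zero γ) hcan
      exact mul_left_cancel₀ (by norm_num : (2 : Polynomial ℝ) ≠ 0) h2
    have hAeq : A' = A := by
      linear_combination e₁ - hP1 - (L + (Polynomial.X - Polynomial.C γ)) * hBeq
    refine Prod.ext ?_ ?_
    · funext j
      have := Lagrange.eval_interpolate_at_node c₁ htinj (Finset.mem_univ j)
      rw [← hA'def] at this
      simp only [← this, hAeq]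
    · funext j
      have := Lagrange.eval_interpolate_at_node c₂ htinj (Finset.mem_univ j)
      rw [← hB'def] at this
      simp only [← this, hBeq]
end

section
/- Under the hypotheses of the discrete existence theorem, if in addition C_L C₀⁻² C_Ω ‖f‖_{L²(Ω)} < 1, then the solution u_h ∈ V of the discrete quasilinear problem a(u_h; u_h, w_h) = ℓ(w_h) for all w_h ∈ V is unique. -/
open MeasureTheory

/-- A concrete model of `H¹₀(0, L)`. -/
def H10 (L : ℝ) : Set (ℝ → ℝ) :=
  {w | ContinuousOn w (Set.Icc 0 L) ∧ w 0 = 0 ∧ w L = 0 ∧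
    (∀ x ∈ Set.Ioo 0 L, DifferentiableAt ℝ w x) ∧
    IntervalIntegrable (deriv w) volume 0 L ∧
    IntervalIntegrable (fun x => (deriv w x) ^ 2) volume 0 L ∧
    IntervalIntegrable (fun x => (w x) ^ 2) volume 0 L}

/-- The quasilinear form `a(v; z, w) = Σ_j ∫_{Ω_j} κ_j(x, v(x)) z'(x) w'(x) dx`. -/
noncomputable def formA (m : ℕ) (s : ℕ → ℝ) (κ : ℕ → ℝ → ℝ → ℝ) (v z w : ℝ → ℝ) : ℝ :=
  ∑ j ∈ Finset.range (m + 1), ∫ x in (s j)..(s (j + 1)), κ j x (v x) * deriv z x * deriv w x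

/-- Product of two L² functions on an interval is integrable. -/
lemma l2mul {a b : ℝ} {Z W : ℝ → ℝ}
    (hZm : AEStronglyMeasurable Z (volume.restrict (Set.uIoc a b)))
    (hWm : AEStronglyMeasurable W (volume.restrict (Set.uIoc a b)))
    (hZ2 : IntervalIntegrable (fun x => Z x ^ 2) volume a b)
    (hW2 : IntervalIntegrable (fun x => W x ^ 2) volume a b) :
    IntervalIntegrable (fun x => Z x * W x) volume a b := by
  rw [intervalIntegrable_iff] at hZ2 hW2 ⊢
  have hb : Integrable (fun x => (Z x ^ 2 + W x ^ 2) / 2) (volume.restrict (Set.uIoc a b)) :=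
    (hZ2.add hW2).div_const 2
  refine hb.mono (hZm.mul hWm) (Filter.Eventually.of_forall fun x => ?_)
  simp only [Real.norm_eq_abs]
  rw [abs_of_nonneg (by positivity : (0:ℝ) ≤ (Z x ^ 2 + W x ^ 2) / 2), abs_mul]
  nlinarith [sq_abs (Z x), sq_abs (W x), sq_nonneg (|Z x| - |W x|), abs_nonneg (Z x),
    abs_nonneg (W x)]

/-- Young's inequality with a parameter. -/
lemma young_aux (t x y : ℝ) (ht : 0 < t) : 2 * (x * y) ≤ t * x ^ 2 + t⁻¹ * y ^ 2 := by
  rw [← mul_le_mul_iff_of_pos_right ht]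
  have h1 : t⁻¹ * t = 1 := inv_mul_cancel₀ ht.ne'
  have h3 : t⁻¹ * t * y ^ 2 = y ^ 2 := by rw [h1, one_mul]
  nlinarith [sq_nonneg (t * x - y), h3]

/-- Cauchy–Schwarz inequality for interval integrals. -/
lemma cs_interval {a b : ℝ} (hab : a ≤ b) {g h : ℝ → ℝ}
    (hgm : AEStronglyMeasurable g (volume.restrict (Set.uIoc a b)))
    (hhm : AEStronglyMeasurable h (volume.restrict (Set.uIoc a b)))
    (hg2 : IntervalIntegrable (fun x => g x ^ 2) volume a b)
    (hh2 : IntervalIntegrable (fun x => h x ^ 2) volume a b) :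
    (∫ x in a..b, |g x * h x|) ≤
      Real.sqrt (∫ x in a..b, g x ^ 2) * Real.sqrt (∫ x in a..b, h x ^ 2) := by
  set G := ∫ x in a..b, g x ^ 2 with hGdef
  set H := ∫ x in a..b, h x ^ 2 with hHdef
  have hG0 : 0 ≤ G := intervalIntegral.integral_nonneg hab fun u _ => sq_nonneg _
  have hH0 : 0 ≤ H := intervalIntegral.integral_nonneg hab fun u _ => sq_nonneg _
  have hP : IntervalIntegrable (fun x => |g x * h x|) volume a b :=
    (l2mul hgm hhm hg2 hh2).abs
  have key : ∀ t : ℝ, 0 < t → 2 * (∫ x in a..b, |g x * h x|) ≤ t * G + t⁻¹ * H := by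
    intro t ht
    have hnn : 0 ≤ ∫ x in a..b,
        ((t * g x ^ 2 + t⁻¹ * h x ^ 2) - 2 * |g x * h x|) := by
      apply intervalIntegral.integral_nonneg hab
      intro u _
      have h4 := young_aux t (|g u|) (|h u|) ht
      rw [sq_abs, sq_abs, ← abs_mul] at h4
      linarith
    rw [intervalIntegral.integral_sub ((hg2.const_mul t).add (hh2.const_mul t⁻¹))
        (hP.const_mul 2),
      intervalIntegral.integral_add (hg2.const_mul t) (hh2.const_mul t⁻¹),
      intervalIntegral.integral_const_mul, intervalIntegral.integral_const_mul,
      intervalIntegral.integral_const_mul] at hnn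
    linarith
  have keps : ∀ ε : ℝ, 0 < ε →
      (∫ x in a..b, |g x * h x|) ≤ Real.sqrt (G + ε) * Real.sqrt (H + ε) := by
    intro ε hε
    have hGe : 0 < G + ε := by linarith
    have hHe : 0 < H + ε := by linarith
    have hsg : 0 < Real.sqrt (G + ε) := Real.sqrt_pos.mpr hGe
    have hsh : 0 < Real.sqrt (H + ε) := Real.sqrt_pos.mpr hHe
    set t : ℝ := Real.sqrt (H + ε) / Real.sqrt (G + ε) with htdef
    have ht : 0 < t := div_pos hsh hsg
    have h1 := key t ht
    have hssG : Real.sqrt (G + ε) * Real.sqrt (G + ε) = G + ε := Real.mul_self_sqrt hGe.le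
    have hssH : Real.sqrt (H + ε) * Real.sqrt (H + ε) = H + ε := Real.mul_self_sqrt hHe.le
    have e1 : t * G ≤ t * (G + ε) := by nlinarith
    have e2 : t⁻¹ * H ≤ t⁻¹ * (H + ε) := by
      have h3 : (0:ℝ) ≤ t⁻¹ := (inv_pos.mpr ht).le
      nlinarith
    have e3 : t * (G + ε) = Real.sqrt (H + ε) * Real.sqrt (G + ε) := by
      calc t * (G + ε) = Real.sqrt (H + ε) * ((G + ε) / Real.sqrt (G + ε)) := by
            rw [htdef]; ring
        _ = Real.sqrt (H + ε) * Real.sqrt (G + ε) := by rw [Real.div_sqrt]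
    have e4 : t⁻¹ * (H + ε) = Real.sqrt (H + ε) * Real.sqrt (G + ε) := by
      have hti : t⁻¹ = Real.sqrt (G + ε) / Real.sqrt (H + ε) := by rw [htdef, inv_div]
      calc t⁻¹ * (H + ε) = Real.sqrt (G + ε) * ((H + ε) / Real.sqrt (H + ε)) := by
            rw [hti]; ring
        _ = Real.sqrt (H + ε) * Real.sqrt (G + ε) := by rw [Real.div_sqrt]; ring
    have hcomm : Real.sqrt (G + ε) * Real.sqrt (H + ε)
        = Real.sqrt (H + ε) * Real.sqrt (G + ε) := mul_comm _ _
    linarith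
  have hc : Filter.Tendsto (fun ε : ℝ => Real.sqrt (G + ε) * Real.sqrt (H + ε))
      (nhdsWithin 0 (Set.Ioi 0)) (nhds (Real.sqrt G * Real.sqrt H)) := by
    have hcont : Continuous fun ε : ℝ => Real.sqrt (G + ε) * Real.sqrt (H + ε) :=
      (Real.continuous_sqrt.comp (continuous_const.add continuous_id)).mul
        (Real.continuous_sqrt.comp (continuous_const.add continuous_id))
    have h0 := hcont.tendsto' 0 (Real.sqrt G * Real.sqrt H) (by simp)
    exact h0.mono_left nhdsWithin_le_nhds
  refine ge_of_tendsto hc ?_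
  filter_upwards [self_mem_nhdsWithin] with ε hε
  exact keps ε hε

set_option maxHeartbeats 1000000 in
/-- under the smallness condition `C_L C₀⁻² C_Ω ‖f‖ < 1` the discrete Galerkin
solution of the quasilinear problem is unique (Banach fixed point theorem). -/
theorem stmt5 (L : ℝ) (hL : 0 < L) (m : ℕ) (s : ℕ → ℝ)
    (hs0 : s 0 = 0) (hsm : s (m + 1) = L) (hmono : ∀ j ≤ m, s j < s (j + 1))
    (κmin κmax CL C₀ CΩ : ℝ) (hκmin : 0 < κmin) (hκle : κmin ≤ κmax)
    (hCL : 0 ≤ CL) (hC0 : 0 < C₀) (hCΩpos : 0 ≤ CΩ)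
    (κ : ℕ → ℝ → ℝ → ℝ)
    (hκcont : ∀ j, Continuous (fun q : ℝ × ℝ => κ j q.1 q.2))
    (hbd : ∀ j x y, κmin ≤ κ j x y ∧ κ j x y ≤ κmax)
    (hlip : ∀ j x y₁ y₂, |κ j x y₁ - κ j x y₂| ≤ CL * |y₁ - y₂|)
    -- coercivity of the form in the full `H¹` norm with constant `C₀`
    (hcoer : ∀ v, ContinuousOn v (Set.Icc 0 L) → ∀ w ∈ H10 L,
      C₀ * ((∫ x in (0:ℝ)..L, (w x) ^ 2) + ∫ x in (0:ℝ)..L, (deriv w x) ^ 2) ≤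
        formA m s κ v w w)
    -- embedding `‖w‖_∞ ≤ C_Ω |w|₁` on `H¹₀(0, L)`
    (hemb : ∀ w ∈ H10 L, ∀ x ∈ Set.Icc 0 L,
      |w x| ≤ CΩ * Real.sqrt (∫ y in (0:ℝ)..L, (deriv w y) ^ 2))
    (f : ℝ → ℝ)
    (hf : IntervalIntegrable f volume 0 L)
    (hf2 : IntervalIntegrable (fun x => (f x) ^ 2) volume 0 L)
    -- smallness condition `C_L C₀⁻² C_Ω ‖f‖ < 1`
    (hsmall : CL * (C₀ ^ 2)⁻¹ * CΩ * Real.sqrt (∫ x in (0:ℝ)..L, (f x) ^ 2) < 1)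
    (V : Submodule ℝ (ℝ → ℝ)) (hVfin : FiniteDimensional ℝ V)
    (hVsub : ∀ w ∈ V, w ∈ H10 L)
    (u₁ u₂ : ℝ → ℝ) (hu₁V : u₁ ∈ V) (hu₂V : u₂ ∈ V)
    (hsol₁ : ∀ w ∈ V, formA m s κ u₁ u₁ w = ∫ x in (0:ℝ)..L, f x * w x)
    (hsol₂ : ∀ w ∈ V, formA m s κ u₂ u₂ w = ∫ x in (0:ℝ)..L, f x * w x) :
    Set.EqOn u₁ u₂ (Set.Icc 0 L) := by
  classical
  -- basic facts about the partition
  have smono : ∀ i j : ℕ, i ≤ j → j ≤ m + 1 → s i ≤ s j := by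
    intro i j hij hjm
    induction j with
    | zero => rw [Nat.le_zero.mp hij]
    | succ k ih =>
      rcases Nat.eq_or_lt_of_le hij with h | h
      · rw [h]
      · exact le_trans (ih (Nat.lt_succ_iff.mp h) (by omega)) (hmono k (by omega)).le
  have hs_nonneg : ∀ j, j ≤ m + 1 → 0 ≤ s j := fun j hj =>
    hs0 ▸ smono 0 j (Nat.zero_le _) hj
  have hs_leL : ∀ j, j ≤ m + 1 → s j ≤ L := fun j hj => hsm ▸ smono j (m + 1) hj le_rfl
  have hstep : ∀ j, j ≤ m → s j ≤ s (j + 1) := fun j hj => (hmono j hj).le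
  have hIccsub : ∀ j, j ≤ m → Set.Icc (s j) (s (j + 1)) ⊆ Set.Icc 0 L := by
    intro j hj x hx
    exact ⟨le_trans (hs_nonneg j (by omega)) hx.1, le_trans hx.2 (hs_leL (j + 1) (by omega))⟩
  have huIccsub : ∀ j, j ≤ m → Set.uIcc (s j) (s (j + 1)) ⊆ Set.uIcc (0:ℝ) L := by
    intro j hj
    rw [Set.uIcc_of_le (hstep j hj), Set.uIcc_of_le hL.le]
    exact hIccsub j hj
  have huIocsub : ∀ j, j ≤ m → Set.uIoc (s j) (s (j + 1)) ⊆ Set.Icc 0 L := by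
    intro j hj
    rw [Set.uIoc_of_le (hstep j hj)]
    exact Set.Ioc_subset_Icc_self.trans (hIccsub j hj)
  -- H¹₀ data
  obtain ⟨hc₁, -, -, hd₁, hi₁, hi₁2, hsq₁⟩ := hVsub u₁ hu₁V
  obtain ⟨hc₂, -, -, hd₂, hi₂, hi₂2, hsq₂⟩ := hVsub u₂ hu₂V
  have hVe : u₁ - u₂ ∈ V := sub_mem hu₁V hu₂V
  have heH : u₁ - u₂ ∈ H10 L := hVsub _ hVe
  obtain ⟨hce, -, -, hde, hie, hie2, hsqe⟩ := hVsub _ hVe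
  -- derivative of the difference on the open interval
  have hdsub : ∀ x ∈ Set.Ioo 0 L, deriv (u₁ - u₂) x = deriv u₁ x - deriv u₂ x := by
    intro x hx
    have : (u₁ - u₂) = fun y => u₁ y - u₂ y := rfl
    rw [this, deriv_fun_sub (hd₁ x hx) (hd₂ x hx)]
  -- a.e. avoidance of the right endpoint
  have hneL : ∀ᵐ x : ℝ ∂volume, x ≠ L := by
    rw [MeasureTheory.ae_iff]
    have : {x : ℝ | ¬x ≠ L} = {L} := by ext x; simp
    rw [this]
    exact Real.volume_singleton
  -- measurability helpers
  have hmde : AEStronglyMeasurable (deriv (u₁ - u₂)) (volume.restrict (Set.uIoc 0 L)) :=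
    (measurable_deriv _).aestronglyMeasurable
  have hmd₂ : AEStronglyMeasurable (deriv u₂) (volume.restrict (Set.uIoc 0 L)) :=
    (measurable_deriv _).aestronglyMeasurable
  have hIocIcc : Set.uIoc (0:ℝ) L ⊆ Set.Icc 0 L := by
    rw [Set.uIoc_of_le hL.le]; exact Set.Ioc_subset_Icc_self
  have hmf : AEStronglyMeasurable f (volume.restrict (Set.uIoc 0 L)) := by
    rw [intervalIntegrable_iff] at hf
    exact hf.aestronglyMeasurable
  have hmu₂ : AEStronglyMeasurable u₂ (volume.restrict (Set.uIoc 0 L)) :=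
    (hc₂.aestronglyMeasurable measurableSet_Icc).mono_measure
      (Measure.restrict_mono hIocIcc le_rfl)
  -- integrability of products on (0, L)
  have hee : IntervalIntegrable (fun x => deriv (u₁ - u₂) x * deriv (u₁ - u₂) x) volume 0 L :=
    l2mul hmde hmde hie2 hie2
  have hu2e : IntervalIntegrable (fun x => deriv u₂ x * deriv (u₁ - u₂) x) volume 0 L :=
    l2mul hmd₂ hmde hi₂2 hie2
  have habs : IntervalIntegrable (fun x => |deriv u₂ x * deriv (u₁ - u₂) x|) volume 0 L :=
    hu2e.abs
  have hfu : IntervalIntegrable (fun x => f x * u₂ x) volume 0 L :=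
    l2mul hmf hmu₂ hf2 hsq₂
  -- κ-weighted integrability on subintervals
  have hκint : ∀ j, j ≤ m → ∀ (v : ℝ → ℝ), ContinuousOn v (Set.Icc 0 L) →
      ∀ (P : ℝ → ℝ), IntervalIntegrable P volume 0 L →
      IntervalIntegrable (fun x => κ j x (v x) * P x) volume (s j) (s (j + 1)) := by
    intro j hj v hv P hP
    have hPj : IntervalIntegrable P volume (s j) (s (j + 1)) := hP.mono_set (huIccsub j hj)
    rw [intervalIntegrable_iff] at hPj ⊢
    have hκm : AEStronglyMeasurable (fun x => κ j x (v x))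
        (volume.restrict (Set.uIoc (s j) (s (j + 1)))) := by
      have hcont : ContinuousOn (fun x => κ j x (v x)) (Set.Icc 0 L) :=
        (hκcont j).comp_continuousOn (f := fun x => (x, v x)) (continuousOn_id.prodMk hv)
      exact (hcont.aestronglyMeasurable measurableSet_Icc).mono_measure
        (Measure.restrict_mono (huIocsub j hj) le_rfl)
    refine hPj.bdd_mul (c := κmax) hκm (Filter.Eventually.of_forall fun x => ?_)
    have h1 := (hbd j x (v x)).1
    have h2 := (hbd j x (v x)).2
    rw [Real.norm_eq_abs, abs_of_nonneg (le_trans hκmin.le h1)]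
    exact h2
  -- key per-interval identity
  have key : ∀ j ∈ Finset.range (m + 1),
      (∫ x in s j..s (j + 1), κ j x (u₁ x) * deriv u₁ x * deriv (u₁ - u₂) x) =
      (∫ x in s j..s (j + 1), κ j x (u₁ x) * deriv (u₁ - u₂) x * deriv (u₁ - u₂) x) +
      ((∫ x in s j..s (j + 1), κ j x (u₂ x) * deriv u₂ x * deriv (u₁ - u₂) x) +
        ∫ x in s j..s (j + 1),
          (κ j x (u₁ x) - κ j x (u₂ x)) * (deriv u₂ x * deriv (u₁ - u₂) x)) := by
    intro j hj
    rw [Finset.mem_range, Nat.lt_succ_iff] at hj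
    have hab : s j ≤ s (j + 1) := hstep j hj
    have iC : IntervalIntegrable
        (fun x => κ j x (u₁ x) * (deriv (u₁ - u₂) x * deriv (u₁ - u₂) x))
        volume (s j) (s (j + 1)) := hκint j hj u₁ hc₁ _ hee
    have iB : IntervalIntegrable
        (fun x => κ j x (u₂ x) * (deriv u₂ x * deriv (u₁ - u₂) x))
        volume (s j) (s (j + 1)) := hκint j hj u₂ hc₂ _ hu2e
    have iB' : IntervalIntegrable
        (fun x => κ j x (u₁ x) * (deriv u₂ x * deriv (u₁ - u₂) x))
        volume (s j) (s (j + 1)) := hκint j hj u₁ hc₁ _ hu2e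
    have iD : IntervalIntegrable
        (fun x => (κ j x (u₁ x) - κ j x (u₂ x)) * (deriv u₂ x * deriv (u₁ - u₂) x))
        volume (s j) (s (j + 1)) := by
      have := iB'.sub iB
      simpa only [sub_mul] using this
    have iC2 : IntervalIntegrable
        (fun x => κ j x (u₁ x) * deriv (u₁ - u₂) x * deriv (u₁ - u₂) x)
        volume (s j) (s (j + 1)) := by simpa only [mul_assoc] using iC
    have iB2 : IntervalIntegrable
        (fun x => κ j x (u₂ x) * deriv u₂ x * deriv (u₁ - u₂) x)
        volume (s j) (s (j + 1)) := by simpa only [mul_assoc] using iB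
    have hstep1 :
        (∫ x in s j..s (j + 1), κ j x (u₁ x) * deriv u₁ x * deriv (u₁ - u₂) x) =
        ∫ x in s j..s (j + 1),
          (κ j x (u₁ x) * deriv (u₁ - u₂) x * deriv (u₁ - u₂) x +
            (κ j x (u₂ x) * deriv u₂ x * deriv (u₁ - u₂) x +
              (κ j x (u₁ x) - κ j x (u₂ x)) * (deriv u₂ x * deriv (u₁ - u₂) x))) := by
      apply intervalIntegral.integral_congr_ae
      filter_upwards [hneL] with x hxne hmem
      rw [Set.uIoc_of_le hab] at hmem
      have hxIoo : x ∈ Set.Ioo 0 L :=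
        ⟨lt_of_le_of_lt (hs_nonneg j (by omega)) hmem.1,
          lt_of_le_of_ne (hmem.2.trans (hs_leL (j + 1) (by omega))) hxne⟩
      rw [hdsub x hxIoo]
      ring
    rw [hstep1, intervalIntegral.integral_add iC2 (iB2.add iD),
      intervalIntegral.integral_add iB2 iD]
  -- summation of the key identity
  set S := ∑ j ∈ Finset.range (m + 1), ∫ x in s j..s (j + 1),
      (κ j x (u₁ x) - κ j x (u₂ x)) * (deriv u₂ x * deriv (u₁ - u₂) x) with hSdef
  have hform : formA m s κ u₁ u₁ (u₁ - u₂) =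
      formA m s κ u₁ (u₁ - u₂) (u₁ - u₂) + (formA m s κ u₂ u₂ (u₁ - u₂) + S) := by
    unfold formA
    rw [hSdef, ← Finset.sum_add_distrib, ← Finset.sum_add_distrib]
    exact Finset.sum_congr rfl key
  have h0 : formA m s κ u₁ u₁ (u₁ - u₂) = formA m s κ u₂ u₂ (u₁ - u₂) := by
    rw [hsol₁ _ hVe, hsol₂ _ hVe]
  have hEid : formA m s κ u₁ (u₁ - u₂) (u₁ - u₂) = -S := by linarith
  -- norms
  set E := ∫ x in (0:ℝ)..L, (deriv (u₁ - u₂) x) ^ 2 with hEdef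
  set U := ∫ x in (0:ℝ)..L, (deriv u₂ x) ^ 2 with hUdef
  have hE0 : 0 ≤ E := intervalIntegral.integral_nonneg hL.le fun u _ => sq_nonneg _
  have hU0 : 0 ≤ U := intervalIntegral.integral_nonneg hL.le fun u _ => sq_nonneg _
  set K := CL * (CΩ * Real.sqrt E) with hKdef
  have hK0 : 0 ≤ K := mul_nonneg hCL (mul_nonneg hCΩpos (Real.sqrt_nonneg _))
  -- bound each summand of -S
  have hbound : ∀ j ∈ Finset.range (m + 1),
      -(∫ x in s j..s (j + 1),
          (κ j x (u₁ x) - κ j x (u₂ x)) * (deriv u₂ x * deriv (u₁ - u₂) x))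
      ≤ ∫ x in s j..s (j + 1), K * |deriv u₂ x * deriv (u₁ - u₂) x| := by
    intro j hj
    rw [Finset.mem_range, Nat.lt_succ_iff] at hj
    have hab := hstep j hj
    have iB : IntervalIntegrable
        (fun x => κ j x (u₂ x) * (deriv u₂ x * deriv (u₁ - u₂) x))
        volume (s j) (s (j + 1)) := hκint j hj u₂ hc₂ _ hu2e
    have iB' : IntervalIntegrable
        (fun x => κ j x (u₁ x) * (deriv u₂ x * deriv (u₁ - u₂) x))
        volume (s j) (s (j + 1)) := hκint j hj u₁ hc₁ _ hu2e
    have iD : IntervalIntegrable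
        (fun x => (κ j x (u₁ x) - κ j x (u₂ x)) * (deriv u₂ x * deriv (u₁ - u₂) x))
        volume (s j) (s (j + 1)) := by
      simpa only [sub_mul] using iB'.sub iB
    have iK : IntervalIntegrable (fun x => K * |deriv u₂ x * deriv (u₁ - u₂) x|)
        volume (s j) (s (j + 1)) := (habs.const_mul K).mono_set (huIccsub j hj)
    rw [← intervalIntegral.integral_neg]
    apply intervalIntegral.integral_mono_on hab iD.neg iK
    intro x hx
    have hxI : x ∈ Set.Icc 0 L := hIccsub j hj hx
    have hl := hlip j x (u₁ x) (u₂ x)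
    have hem := hemb (u₁ - u₂) heH x hxI
    rw [← hEdef] at hem
    have hem' : |u₁ x - u₂ x| ≤ CΩ * Real.sqrt E := by
      simpa [Pi.sub_apply] using hem
    calc -((κ j x (u₁ x) - κ j x (u₂ x)) * (deriv u₂ x * deriv (u₁ - u₂) x))
        ≤ |(κ j x (u₁ x) - κ j x (u₂ x)) * (deriv u₂ x * deriv (u₁ - u₂) x)| :=
          neg_le_abs _
      _ = |κ j x (u₁ x) - κ j x (u₂ x)| * |deriv u₂ x * deriv (u₁ - u₂) x| := abs_mul _ _
      _ ≤ (CL * |u₁ x - u₂ x|) * |deriv u₂ x * deriv (u₁ - u₂) x| :=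
          mul_le_mul_of_nonneg_right hl (abs_nonneg _)
      _ ≤ K * |deriv u₂ x * deriv (u₁ - u₂) x| := by
          apply mul_le_mul_of_nonneg_right _ (abs_nonneg _)
          rw [hKdef]
          exact mul_le_mul_of_nonneg_left hem' hCL
  have hSbound : -S ≤ ∑ j ∈ Finset.range (m + 1),
      ∫ x in s j..s (j + 1), K * |deriv u₂ x * deriv (u₁ - u₂) x| := by
    rw [hSdef, ← Finset.sum_neg_distrib]
    exact Finset.sum_le_sum hbound
  -- glue the subintervals together
  have hadj : (∑ j ∈ Finset.range (m + 1),
        ∫ x in s j..s (j + 1), K * |deriv u₂ x * deriv (u₁ - u₂) x|)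
      = ∫ x in (0:ℝ)..L, K * |deriv u₂ x * deriv (u₁ - u₂) x| := by
    have h := intervalIntegral.sum_integral_adjacent_intervals
      (f := fun x => K * |deriv u₂ x * deriv (u₁ - u₂) x|) (a := s) (μ := volume)
      (n := m + 1)
      (fun k hk => (habs.const_mul K).mono_set (huIccsub k (Nat.lt_succ_iff.mp hk)))
    rw [hs0, hsm] at h
    exact h
  -- Cauchy–Schwarz
  have hCS : (∫ x in (0:ℝ)..L, |deriv u₂ x * deriv (u₁ - u₂) x|)
      ≤ Real.sqrt U * Real.sqrt E :=
    cs_interval hL.le hmd₂ hmde hi₂2 hie2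
  have hchain : formA m s κ u₁ (u₁ - u₂) (u₁ - u₂) ≤ K * (Real.sqrt U * Real.sqrt E) := by
    rw [hEid]
    calc -S ≤ ∑ j ∈ Finset.range (m + 1),
          ∫ x in s j..s (j + 1), K * |deriv u₂ x * deriv (u₁ - u₂) x| := hSbound
      _ = ∫ x in (0:ℝ)..L, K * |deriv u₂ x * deriv (u₁ - u₂) x| := hadj
      _ = K * ∫ x in (0:ℝ)..L, |deriv u₂ x * deriv (u₁ - u₂) x| :=
          intervalIntegral.integral_const_mul _ _
      _ ≤ K * (Real.sqrt U * Real.sqrt E) := mul_le_mul_of_nonneg_left hCS hK0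
  -- coercivity for the difference
  have hco := hcoer u₁ hc₁ (u₁ - u₂) heH
  rw [← hEdef] at hco
  have hm2 : 0 ≤ ∫ x in (0:ℝ)..L, ((u₁ - u₂) x) ^ 2 :=
    intervalIntegral.integral_nonneg hL.le fun u _ => sq_nonneg _
  have hmain : C₀ * E ≤ K * (Real.sqrt U * Real.sqrt E) := by
    have hdist : C₀ * ((∫ x in (0:ℝ)..L, ((u₁ - u₂) x) ^ 2) + E)
        = C₀ * (∫ x in (0:ℝ)..L, ((u₁ - u₂) x) ^ 2) + C₀ * E := mul_add _ _ _
    have hXnn : 0 ≤ C₀ * (∫ x in (0:ℝ)..L, ((u₁ - u₂) x) ^ 2) := mul_nonneg hC0.le hm2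
    linarith [hco, hchain, hdist, hXnn]
  -- a priori bound on u₂
  have hF0 : 0 ≤ ∫ x in (0:ℝ)..L, (f x) ^ 2 :=
    intervalIntegral.integral_nonneg hL.le fun u _ => sq_nonneg _
  set sF := Real.sqrt (∫ x in (0:ℝ)..L, (f x) ^ 2) with hsFdef
  have hsF0 : 0 ≤ sF := Real.sqrt_nonneg _
  set A := ∫ x in (0:ℝ)..L, (u₂ x) ^ 2 with hAdef
  have hA0 : 0 ≤ A := intervalIntegral.integral_nonneg hL.le fun u _ => sq_nonneg _
  have hcu₂ := hcoer u₂ hc₂ u₂ (hVsub u₂ hu₂V)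
  have hfu2 : formA m s κ u₂ u₂ u₂ = ∫ x in (0:ℝ)..L, f x * u₂ x := hsol₂ u₂ hu₂V
  have hCSf : (∫ x in (0:ℝ)..L, f x * u₂ x) ≤ sF * Real.sqrt A := by
    have h1 : (∫ x in (0:ℝ)..L, f x * u₂ x) ≤ ∫ x in (0:ℝ)..L, |f x * u₂ x| := by
      have h2 := intervalIntegral.abs_integral_le_integral_abs
        (f := fun x => f x * u₂ x) (μ := volume) (a := (0:ℝ)) (b := L) hL.le
      exact le_trans (le_abs_self _) h2
    exact h1.trans (cs_interval hL.le hmf hmu₂ hf2 hsq₂)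
  have hsqU : Real.sqrt U * Real.sqrt U = U := Real.mul_self_sqrt hU0
  have hsqA : Real.sqrt A * Real.sqrt A = A := Real.mul_self_sqrt hA0
  rw [← hAdef, ← hUdef] at hcu₂
  have hq : C₀ * (A + U) ≤ sF * Real.sqrt A := by
    rw [hfu2] at hcu₂
    linarith [hcu₂, hCSf]
  have h4 : 4 * C₀ ^ 2 * U ≤ sF * sF := by
    nlinarith [hq, hsqA, sq_nonneg (2 * C₀ * Real.sqrt A - sF), hC0]
  have hUb : 2 * C₀ * Real.sqrt U ≤ sF := by
    nlinarith [h4, hsqU, Real.sqrt_nonneg U, hsF0, hC0,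
      mul_nonneg (mul_nonneg (by norm_num : (0:ℝ) ≤ 2) hC0.le) (Real.sqrt_nonneg U)]
  -- smallness
  have hsmall' : CL * CΩ * sF < C₀ ^ 2 := by
    have h2 : (0:ℝ) < C₀ ^ 2 := by positivity
    have h3 : CL * CΩ * sF = (CL * (C₀ ^ 2)⁻¹ * CΩ * sF) * C₀ ^ 2 := by
      field_simp
    calc CL * CΩ * sF = (CL * (C₀ ^ 2)⁻¹ * CΩ * sF) * C₀ ^ 2 := h3
      _ < 1 * C₀ ^ 2 := mul_lt_mul_of_pos_right hsmall h2
      _ = C₀ ^ 2 := one_mul _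
  -- conclude E = 0
  have hsqE : Real.sqrt E * Real.sqrt E = E := Real.mul_self_sqrt hE0
  have h5 : C₀ * E ≤ CL * CΩ * Real.sqrt U * E := by
    calc C₀ * E ≤ K * (Real.sqrt U * Real.sqrt E) := hmain
      _ = CL * CΩ * Real.sqrt U * (Real.sqrt E * Real.sqrt E) := by rw [hKdef]; ring
      _ = CL * CΩ * Real.sqrt U * E := by rw [hsqE]
  have hEzero : E = 0 := by
    by_contra hne
    have hEpos : 0 < E := lt_of_le_of_ne hE0 (Ne.symm hne)
    have h7 : 2 * C₀ * (C₀ * E) ≤ 2 * C₀ * (CL * CΩ * Real.sqrt U * E) :=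
      mul_le_mul_of_nonneg_left h5 (by positivity)
    have h8 : 2 * C₀ * (CL * CΩ * Real.sqrt U * E)
        = (CL * CΩ * E) * (2 * C₀ * Real.sqrt U) := by ring
    have h9 : (CL * CΩ * E) * (2 * C₀ * Real.sqrt U) ≤ (CL * CΩ * E) * sF :=
      mul_le_mul_of_nonneg_left hUb
        (mul_nonneg (mul_nonneg hCL hCΩpos) hE0)
    have h10 : (CL * CΩ * E) * sF = (CL * CΩ * sF) * E := by ring
    have h11 : (CL * CΩ * sF) * E < C₀ ^ 2 * E := mul_lt_mul_of_pos_right hsmall' hEpos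
    have h12 : 2 * C₀ * (C₀ * E) = 2 * (C₀ ^ 2 * E) := by ring
    have h13 : 0 < C₀ ^ 2 * E := mul_pos (pow_pos hC0 2) hEpos
    linarith
  -- finish
  intro x hx
  have hem := hemb (u₁ - u₂) heH x hx
  rw [← hEdef, hEzero, Real.sqrt_zero, mul_zero] at hem
  have h6 : u₁ x - u₂ x = 0 := by simpa [Pi.sub_apply] using hem
  exact sub_eq_zero.mp h6
end

section
/- Let v ∈ H^{p+1}(ς) for an interval ς of length at most h, and let q be a polynomial of degree at most p interpolating v at p+1 distinct points of ς̄, with e = v − q. Then for every x ∈ ς̄, |e'(x)| ≤ h^{p−1/2} ‖v^{(p+1)}‖_{L²(ς)}. -/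
open MeasureTheory Set

lemma contDiff_polyeval (n : WithTop ℕ∞) (q : Polynomial ℝ) :
    ContDiff ℝ n (fun x : ℝ => q.eval x) := by
  induction q using Polynomial.induction_on' with
  | add r s hr hs => simpa [Polynomial.eval_add] using hr.add hs
  | monomial i c =>
      simp only [Polynomial.eval_monomial]
      exact contDiff_const.mul (contDiff_id.pow i)

lemma iteratedDeriv_polyeval (n : ℕ) (q : Polynomial ℝ) :
    iteratedDeriv n (fun x : ℝ => q.eval x) =
      fun x => (Polynomial.derivative^[n] q).eval x := by
  induction n with
  | zero => simp
  | succ n ih =>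
      rw [iteratedDeriv_succ, ih]
      funext x
      rw [Function.iterate_succ_apply']
      exact Polynomial.deriv (𝕜 := ℝ) (p := Polynomial.derivative^[n] q)

lemma iteratedDeriv_sub' {n : ℕ} {f g : ℝ → ℝ}
    (hf : ContDiff ℝ n f) (hg : ContDiff ℝ n g) (x : ℝ) :
    iteratedDeriv n (fun y => f y - g y) x = iteratedDeriv n f x - iteratedDeriv n g x := by
  simp only [← iteratedDerivWithin_univ]
  exact iteratedDerivWithin_sub (Set.mem_univ x) uniqueDiffOn_univ
    hf.contDiffWithinAt hg.contDiffWithinAt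

lemma iterated_rolle (a b : ℝ) :
    ∀ (n : ℕ) (f : ℝ → ℝ), ContDiff ℝ n f →
    ∀ (ζ : Fin (n + 1) → ℝ), StrictMono ζ → (∀ i, ζ i ∈ Set.Icc a b) →
    (∀ i, f (ζ i) = 0) → ∀ k ≤ n, ∃ x ∈ Set.Icc a b, iteratedDeriv k f x = 0 := by
  intro n
  induction n with
  | zero =>
      intro f _ ζ _ hmem hz k hk
      rw [Nat.le_zero.mp hk]
      exact ⟨ζ 0, hmem 0, by simpa using hz 0⟩
  | succ n ih =>
      intro f hf ζ hζ hmem hz k hk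
      match k with
      | 0 => exact ⟨ζ 0, hmem 0, by simpa using hz 0⟩
      | (j + 1) =>
        have key : ∀ i : Fin (n + 1),
            ∃ x, x ∈ Set.Ioo (ζ i.castSucc) (ζ i.succ) ∧ deriv f x = 0 := by
          intro i
          obtain ⟨c, hc, hc0⟩ := exists_deriv_eq_zero (f := f)
            (hζ (Fin.castSucc_lt_succ (i := i))) hf.continuous.continuousOn
            ((hz i.castSucc).trans (hz i.succ).symm)
          exact ⟨c, hc, hc0⟩
        choose ξ hξmem hξ0 using key
        have hξmono : StrictMono ξ := by
          intro i j hij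
          have h1 : ζ i.succ ≤ ζ j.castSucc := by
            apply hζ.monotone
            simp only [Fin.le_def, Fin.lt_def] at hij ⊢
            simpa using hij
          exact lt_of_lt_of_le (hξmem i).2 (h1.trans_lt (hξmem j).1).le
        have hξIcc : ∀ i, ξ i ∈ Set.Icc a b := fun i =>
          ⟨(hmem i.castSucc).1.trans (hξmem i).1.le,
           (hξmem i).2.le.trans (hmem i.succ).2⟩
        have hf1 : ContDiff ℝ ((n : WithTop ℕ∞) + 1) f := by exact_mod_cast hf
        have hdf : ContDiff ℝ (n : WithTop ℕ∞) (deriv f) :=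
          (contDiff_succ_iff_deriv.mp hf1).2.2
        obtain ⟨x, hx, hx0⟩ := ih (deriv f) hdf ξ hξmono hξIcc hξ0 j
          (Nat.succ_le_succ_iff.mp hk)
        exact ⟨x, hx, by rwa [iteratedDeriv_succ']⟩

lemma l1_le_sqrt_mul_l2 (a b : ℝ) (hab : a ≤ b) (G : ℝ → ℝ) (hG : Continuous G) :
    ∫ t in Set.Ioc a b, |G t| ≤
      Real.sqrt (b - a) * Real.sqrt (∫ t in a..b, (G t) ^ 2) := by
  set μ : Measure ℝ := volume.restrict (Set.Ioc a b) with hμ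
  haveI : IsFiniteMeasure μ := by
    constructor
    rw [hμ, Measure.restrict_apply_univ, Real.volume_Ioc]
    exact ENNReal.ofReal_lt_top
  obtain ⟨C, hC⟩ := (isCompact_Icc (a := a) (b := b)).exists_bound_of_continuousOn
    hG.continuousOn
  have habs : AEStronglyMeasurable (fun t => |G t|) μ := hG.abs.aestronglyMeasurable
  have hmem : MemLp (fun t => |G t|) (ENNReal.ofReal 2) μ := by
    refine MemLp.of_bound habs C ?_
    refine (ae_restrict_iff' measurableSet_Ioc).mpr (ae_of_all _ fun x hx => ?_)
    simpa [Real.norm_eq_abs, abs_abs] using hC x (Set.Ioc_subset_Icc_self hx)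
  have hone : MemLp (fun _ : ℝ => (1 : ℝ)) (ENNReal.ofReal 2) μ :=
    memLp_const 1
  have hconj : Real.HolderConjugate 2 2 := Real.HolderConjugate.two_two
  have key := integral_mul_le_Lp_mul_Lq_of_nonneg (μ := μ) hconj
    (ae_of_all _ fun t => abs_nonneg (G t)) (ae_of_all _ fun _ => zero_le_one)
    hmem hone
  simp only [mul_one] at key
  have h2 : ∀ t : ℝ, |G t| ^ (2 : ℝ) = (G t) ^ 2 := by
    intro t
    rw [show ((2:ℝ)) = ((2:ℕ):ℝ) by norm_num, Real.rpow_natCast, sq_abs]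
  have hInt2 : ∫ t, |G t| ^ (2 : ℝ) ∂μ = ∫ t in a..b, (G t) ^ 2 := by
    rw [intervalIntegral.integral_of_le hab]
    exact integral_congr_ae (ae_of_all _ fun t => h2 t)
  have hIntOne : ∫ _ : ℝ, (1 : ℝ) ^ (2 : ℝ) ∂μ = b - a := by
    simp [hμ, Real.volume_Ioc, ENNReal.toReal_ofReal (sub_nonneg.mpr hab), hab]
  rw [hInt2, hIntOne] at key
  calc ∫ t in Set.Ioc a b, |G t| = ∫ t, |G t| ∂μ := rfl
    _ ≤ (∫ t in a..b, (G t) ^ 2) ^ (1 / 2 : ℝ) * (b - a) ^ (1 / 2 : ℝ) := key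
    _ = Real.sqrt (b - a) * Real.sqrt (∫ t in a..b, (G t) ^ 2) := by
        rw [← Real.sqrt_eq_rpow, ← Real.sqrt_eq_rpow, mul_comm]



/-- pointwise bound on the derivative of the polynomial interpolation error:
if `q` of degree `≤ p` interpolates `v` at `p+1` distinct points of an interval of length at
most `h`, then `|(v − q)'(x)| ≤ h^{p − 1/2} ‖v^{(p+1)}‖_{L²(ς)}` on that interval. -/
theorem stmt9 (p : ℕ) (hp : 1 ≤ p) (a b h : ℝ) (hab : a < b) (hlen : b - a ≤ h)
    (v : ℝ → ℝ) (hv : ContDiff ℝ (p + 1 : ℕ) v)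
    (q : Polynomial ℝ) (hq : q.natDegree ≤ p)
    (pts : Fin (p + 1) → ℝ) (hinj : Function.Injective pts)
    (hpts : ∀ i, pts i ∈ Set.Icc a b)
    (hinterp : ∀ i, v (pts i) = q.eval (pts i)) :
    ∀ x ∈ Set.Icc a b,
      |deriv (fun y => v y - q.eval y) x| ≤
        h ^ ((p : ℝ) - 1 / 2) *
          Real.sqrt (∫ t in a..b, (iteratedDeriv (p + 1) v t) ^ 2) := by
  
  have hpos : (0 : ℝ) < h := lt_of_lt_of_le (sub_pos.mpr hab) hlen
  set S := Real.sqrt (∫ t in a..b, (iteratedDeriv (p + 1) v t) ^ 2) with hS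
  have hS0 : 0 ≤ S := Real.sqrt_nonneg _
  set e : ℝ → ℝ := fun y => v y - q.eval y with he
  have hE : ContDiff ℝ ((p + 1 : ℕ) : WithTop ℕ∞) e := hv.sub (contDiff_polyeval _ q)
  have hEp : ContDiff ℝ ((p : ℕ) : WithTop ℕ∞) e :=
    hE.of_le (by exact_mod_cast Nat.le_succ p)
  -- zeros of iterated derivatives via repeated Rolle
  set ζ : Fin (p + 1) → ℝ := pts ∘ Tuple.sort pts with hζdef
  have hζmono : StrictMono ζ :=
    (Tuple.monotone_sort pts).strictMono_of_injective (hinj.comp (Equiv.injective _))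
  have hzero : ∀ k ≤ p, ∃ x ∈ Set.Icc a b, iteratedDeriv k e x = 0 :=
    iterated_rolle a b p e hEp ζ hζmono (fun i => hpts _)
      (fun i => sub_eq_zero.mpr (hinterp _))
  -- top derivative of e equals that of v
  have hEtop : ∀ t, iteratedDeriv (p + 1) e t = iteratedDeriv (p + 1) v t := by
    intro t
    rw [he]
    rw [iteratedDeriv_sub' hv (contDiff_polyeval _ q) t, iteratedDeriv_polyeval,
      Polynomial.iterate_derivative_eq_zero (Nat.lt_succ_of_le hq)]
    simp
  have hcont : ∀ j : ℕ, j ≤ p + 1 → Continuous (iteratedDeriv j e) := fun j hj =>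
    hE.continuous_iteratedDeriv j (by exact_mod_cast hj)
  have hG : Continuous (iteratedDeriv (p + 1) v) :=
    hv.continuous_iteratedDeriv _ (by exact_mod_cast le_rfl)
  -- fundamental theorem of calculus
  have ftc : ∀ j : ℕ, j ≤ p → ∀ c x : ℝ,
      (∫ t in c..x, iteratedDeriv (j + 1) e t) =
        iteratedDeriv j e x - iteratedDeriv j e c := by
    intro j hj c x
    apply intervalIntegral.integral_eq_sub_of_hasDerivAt
    · intro t _
      have hd : DifferentiableAt ℝ (iteratedDeriv j e) t :=
        (hE.differentiable_iteratedDeriv j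
          (by exact_mod_cast Nat.lt_succ_of_le hj)).differentiableAt
      rw [iteratedDeriv_succ]
      exact hd.hasDerivAt
    · exact ((hcont (j + 1) (by omega)).intervalIntegrable _ _)
  -- L¹–L² bound for the top derivative
  have hL1 : ∫ t in Set.Ioc a b, |iteratedDeriv (p + 1) v t| ≤ Real.sqrt h * S := by
    refine le_trans (l1_le_sqrt_mul_l2 a b hab.le _ hG) ?_
    exact mul_le_mul_of_nonneg_right (Real.sqrt_le_sqrt (by linarith)) hS0
  -- downward induction chain
  have main : ∀ m : ℕ, m ≤ p - 1 → ∀ x ∈ Set.Icc a b,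
      |iteratedDeriv (p - m) e x| ≤ h ^ m * (Real.sqrt h * S) := by
    intro m
    induction m with
    | zero =>
        intro _ x hx
        obtain ⟨ξ, hξ, hξ0⟩ := hzero p le_rfl
        have hftc := ftc p le_rfl ξ x
        have hsubset : Set.uIoc ξ x ⊆ Set.Ioc a b := by
          rw [Set.uIoc]
          exact Set.Ioc_subset_Ioc (le_min hξ.1 hx.1) (max_le hξ.2 hx.2)
        rw [Nat.sub_zero, pow_zero, one_mul]
        calc |iteratedDeriv p e x|
            = |∫ t in ξ..x, iteratedDeriv (p + 1) e t| := by rw [hftc, hξ0, sub_zero]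
          _ ≤ ∫ t in Set.uIoc ξ x, |iteratedDeriv (p + 1) e t| := by
              simpa [Real.norm_eq_abs] using
                intervalIntegral.norm_integral_le_integral_norm_uIoc
                  (f := iteratedDeriv (p + 1) e) (a := ξ) (b := x) (μ := volume)
          _ = ∫ t in Set.uIoc ξ x, |iteratedDeriv (p + 1) v t| := by
              exact integral_congr_ae (ae_of_all _ fun t => by simp only [hEtop t])
          _ ≤ ∫ t in Set.Ioc a b, |iteratedDeriv (p + 1) v t| := by
              apply setIntegral_mono_set
              · exact (hG.abs).integrableOn_Ioc
              · exact ae_of_all _ fun t => abs_nonneg _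
              · exact hsubset.eventuallyLE
          _ ≤ Real.sqrt h * S := hL1
    | succ m ih =>
        intro hm x hx
        have hm' : m ≤ p - 1 := Nat.le_of_succ_le hm
        have hsub : p - (m + 1) + 1 = p - m := by omega
        obtain ⟨ξ, hξ, hξ0⟩ := hzero (p - (m + 1)) (by omega)
        have hftc := ftc (p - (m + 1)) (by omega) ξ x
        have hC0 : 0 ≤ h ^ m * (Real.sqrt h * S) :=
          mul_nonneg (pow_nonneg hpos.le m) (mul_nonneg (Real.sqrt_nonneg h) hS0)
        have hb : ∀ t ∈ Set.uIoc ξ x,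
            ‖iteratedDeriv (p - (m + 1) + 1) e t‖ ≤ h ^ m * (Real.sqrt h * S) := by
          intro t ht
          have htmem : t ∈ Set.Icc a b := by
            have h1 : min ξ x < t := by
              have := ht.1
              simpa using this
            have h2 : t ≤ max ξ x := by
              have := ht.2
              simpa using this
            exact ⟨(le_min hξ.1 hx.1).trans h1.le, h2.trans (max_le hξ.2 hx.2)⟩
          rw [hsub]
          simpa [Real.norm_eq_abs] using ih hm' t htmem
        have hxd : |x - ξ| ≤ h := by
          rw [abs_sub_le_iff]
          constructor <;> linarith [hx.1, hx.2, hξ.1, hξ.2]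
        calc |iteratedDeriv (p - (m + 1)) e x|
            = |∫ t in ξ..x, iteratedDeriv (p - (m + 1) + 1) e t| := by
              rw [hftc, hξ0, sub_zero]
          _ ≤ (h ^ m * (Real.sqrt h * S)) * |x - ξ| := by
              simpa [Real.norm_eq_abs] using
                intervalIntegral.norm_integral_le_of_norm_le_const hb
          _ ≤ (h ^ m * (Real.sqrt h * S)) * h := mul_le_mul_of_nonneg_left hxd hC0
          _ = h ^ (m + 1) * (Real.sqrt h * S) := by ring
  intro x hx
  have hfin := main (p - 1) le_rfl x hx
  have hp1 : p - (p - 1) = 1 := by omega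
  rw [hp1, iteratedDeriv_one] at hfin
  refine le_trans hfin (le_of_eq ?_)
  have hexp : h ^ ((p : ℝ) - 1 / 2) = h ^ (p - 1) * Real.sqrt h := by
    have hcast : (p : ℝ) - 1 / 2 = ((p - 1 : ℕ) : ℝ) + 1 / 2 := by
      rw [Nat.cast_sub hp]
      push_cast
      ring
    rw [hcast, Real.rpow_add hpos, Real.rpow_natCast, Real.sqrt_eq_rpow]
  rw [hexp]
  ring
end

section
/- Let u be the weak solution and ũ_h ∈ Ṽ_h the Galerkin solution of the quasilinear problem, with κ_j ∈ C¹ and Lipschitz in the second variable, κ_min ≤ κ_j ≤ κ_max, and ‖ũ_h‖₁ ≤ C₀⁻¹‖f‖. Let φ ∈ H¹₀(Ω) solve the linearized adjoint problem ā(σ; v, φ) + b̄(σ; v, φ) = (v, u − ũ_h)_{L²} for all v ∈ H¹₀(Ω), where σ(t) = ũ_h + t(u − ũ_h). Then there is C > 0 independent of u and h such that ‖u − ũ_h‖_{L²}² ≤ C |φ − w̃_h|₁ |u − ũ_h|₁ for every w̃_h ∈ Ṽ_h. -/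
open MeasureTheory

/-- The averaged linearized form `ā(σ; v, w)` for `σ(t) = ũ_h + t(u − ũ_h)`. -/
noncomputable def formAbar (m : ℕ) (s : ℕ → ℝ) (κ : ℕ → ℝ → ℝ → ℝ)
    (uh u v w : ℝ → ℝ) : ℝ :=
  ∑ j ∈ Finset.range (m + 1), ∫ x in (s j)..(s (j + 1)),
    (∫ t in (0:ℝ)..1, κ j x (uh x + t * (u x - uh x))) * deriv v x * deriv w x

/-- The averaged linearized form `b̄(σ; v, w)`, where `κ'` is `D₂κ`. -/
noncomputable def formBbar (m : ℕ) (s : ℕ → ℝ) (κ' : ℕ → ℝ → ℝ → ℝ)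
    (uh u v w : ℝ → ℝ) : ℝ :=
  ∑ j ∈ Finset.range (m + 1), ∫ x in (s j)..(s (j + 1)),
    (∫ t in (0:ℝ)..1, κ' j x (uh x + t * (u x - uh x)) *
        (deriv uh x + t * (deriv u x - deriv uh x))) * v x * deriv w x


/-- joint measurability of the partial derivative -/
lemma kprime_measurable (κ κ' : ℝ → ℝ → ℝ)
    (hc : Continuous fun q : ℝ × ℝ => κ q.1 q.2)
    (hD : ∀ x y, HasDerivAt (fun z => κ x z) (κ' x y) y) :
    Measurable fun q : ℝ × ℝ => κ' q.1 q.2 := by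
  apply measurable_of_tendsto_metrizable
    (f := fun n (q : ℝ × ℝ) => (κ q.1 (q.2 + 1 / ((n : ℝ) + 1)) - κ q.1 q.2) * ((n : ℝ) + 1))
  · intro n
    exact (((hc.comp (continuous_fst.prodMk (continuous_snd.add continuous_const))).sub hc).mul
      continuous_const).measurable
  · rw [tendsto_pi_nhds]
    intro q
    have hslope := hasDerivAt_iff_tendsto_slope.mp (hD q.1 q.2)
    have hseq : Filter.Tendsto (fun n : ℕ => q.2 + 1 / ((n : ℝ) + 1)) Filter.atTop
        (nhdsWithin q.2 {q.2}ᶜ) := by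
      apply tendsto_nhdsWithin_of_tendsto_nhds_of_eventually_within
      · have : Filter.Tendsto (fun n : ℕ => 1 / ((n : ℝ) + 1)) Filter.atTop (nhds 0) :=
          tendsto_one_div_add_atTop_nhds_zero_nat
        simpa using (tendsto_const_nhds.add this)
      · filter_upwards with n
        have : (0:ℝ) < 1 / ((n : ℝ) + 1) := by positivity
        simp only [Set.mem_compl_iff, Set.mem_singleton_iff]
        intro hcontra
        nlinarith
    have := hslope.comp hseq
    convert this using 2 with n
    simp only [Function.comp, slope_def_field]
    rw [show q.2 + 1 / ((n:ℝ) + 1) - q.2 = 1 / ((n:ℝ) + 1) by ring, div_div_eq_mul_div, div_one]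

/-- product of two L² functions is integrable -/
lemma mul_integrable {μ : Measure ℝ} {p q : ℝ → ℝ}
    (hp : AEStronglyMeasurable p μ) (hq : AEStronglyMeasurable q μ)
    (hp2 : Integrable (fun x => p x ^ 2) μ) (hq2 : Integrable (fun x => q x ^ 2) μ) :
    Integrable (fun x => p x * q x) μ := by
  refine Integrable.mono' (hp2.add hq2) (hp.mul hq) ?_
  filter_upwards with x
  have h := sq_nonneg (|p x| - |q x|)
  have h2 := sq_nonneg (p x)
  have h3 := sq_nonneg (q x)
  rw [Real.norm_eq_abs, abs_mul]
  simp only [Pi.add_apply]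
  nlinarith [sq_abs (p x), sq_abs (q x), abs_nonneg (p x), abs_nonneg (q x)]

/-- Cauchy–Schwarz -/
lemma cs_integral {μ : Measure ℝ} {p q : ℝ → ℝ}
    (hp : AEStronglyMeasurable p μ) (hq : AEStronglyMeasurable q μ)
    (hp2 : Integrable (fun x => p x ^ 2) μ) (hq2 : Integrable (fun x => q x ^ 2) μ) :
    ∫ x, |p x| * |q x| ∂μ ≤
      Real.sqrt (∫ x, p x ^ 2 ∂μ) * Real.sqrt (∫ x, q x ^ 2 ∂μ) := by
  have h2 : Real.HolderConjugate 2 2 := Real.HolderConjugate.two_two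
  have hmp : MemLp (fun x => |p x|) (ENNReal.ofReal 2) μ := by
    rw [show ENNReal.ofReal 2 = 2 by norm_num]
    have hpabs : AEStronglyMeasurable (fun x => |p x|) μ := by
      have := hp.norm; simpa [Real.norm_eq_abs] using this
    refine (memLp_two_iff_integrable_sq hpabs).mpr ?_
    simpa [sq_abs] using hp2
  have hmq : MemLp (fun x => |q x|) (ENNReal.ofReal 2) μ := by
    rw [show ENNReal.ofReal 2 = 2 by norm_num]
    have hqabs : AEStronglyMeasurable (fun x => |q x|) μ := by
      have := hq.norm; simpa [Real.norm_eq_abs] using this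
    refine (memLp_two_iff_integrable_sq hqabs).mpr ?_
    simpa [sq_abs] using hq2
  have := integral_mul_le_Lp_mul_Lq_of_nonneg h2
    (Filter.Eventually.of_forall fun x => abs_nonneg (p x))
    (Filter.Eventually.of_forall fun x => abs_nonneg (q x)) hmp hmq
  calc ∫ x, |p x| * |q x| ∂μ
      ≤ (∫ x, |p x| ^ (2:ℝ) ∂μ) ^ (1 / (2:ℝ)) * (∫ x, |q x| ^ (2:ℝ) ∂μ) ^ (1 / (2:ℝ)) := by
        simpa using this
    _ = Real.sqrt (∫ x, p x ^ 2 ∂μ) * Real.sqrt (∫ x, q x ^ 2 ∂μ) := by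
        rw [Real.sqrt_eq_rpow, Real.sqrt_eq_rpow]
        congr 1 <;> congr 1 <;> apply integral_congr_ae <;> filter_upwards with x
        · rw [show ((2:ℝ)) = ((2:ℕ):ℝ) by norm_num, Real.rpow_natCast, sq_abs]
        · rw [show ((2:ℝ)) = ((2:ℕ):ℝ) by norm_num, Real.rpow_natCast, sq_abs]

lemma abs_integral_le {μ : Measure ℝ} (p : ℝ → ℝ) :
    |∫ x, p x ∂μ| ≤ ∫ x, |p x| ∂μ := by
  simpa [Real.norm_eq_abs] using norm_integral_le_integral_norm (μ := μ) p

/-- L² triangle inequality for differences -/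
lemma l2_triangle {μ : Measure ℝ} {p q : ℝ → ℝ}
    (hp : AEStronglyMeasurable p μ) (hq : AEStronglyMeasurable q μ)
    (hp2 : Integrable (fun x => p x ^ 2) μ) (hq2 : Integrable (fun x => q x ^ 2) μ) :
    Real.sqrt (∫ x, (p x - q x) ^ 2 ∂μ) ≤
      Real.sqrt (∫ x, p x ^ 2 ∂μ) + Real.sqrt (∫ x, q x ^ 2 ∂μ) := by
  set A := Real.sqrt (∫ x, p x ^ 2 ∂μ)
  set B := Real.sqrt (∫ x, q x ^ 2 ∂μ)
  have hA : 0 ≤ A := Real.sqrt_nonneg _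
  have hB : 0 ≤ B := Real.sqrt_nonneg _
  have hpq : Integrable (fun x => p x * q x) μ := mul_integrable hp hq hp2 hq2
  have hexp : ∫ x, (p x - q x) ^ 2 ∂μ =
      (∫ x, p x ^ 2 ∂μ) - 2 * (∫ x, p x * q x ∂μ) + (∫ x, q x ^ 2 ∂μ) := by
    have : (fun x => (p x - q x) ^ 2) =
        fun x => (p x ^ 2 - 2 * (p x * q x)) + q x ^ 2 := by
      funext x; ring
    have i1 : Integrable (fun x => p x ^ 2 - 2 * (p x * q x)) μ :=
      hp2.sub (hpq.const_mul 2)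
    rw [this, integral_add i1 hq2, integral_sub hp2 (hpq.const_mul 2), MeasureTheory.integral_const_mul]
  have hP : ∫ x, p x ^ 2 ∂μ = A ^ 2 := by
    rw [Real.sq_sqrt (integral_nonneg fun x => sq_nonneg _)]
  have hQ : ∫ x, q x ^ 2 ∂μ = B ^ 2 := by
    rw [Real.sq_sqrt (integral_nonneg fun x => sq_nonneg _)]
  have hcs : |∫ x, p x * q x ∂μ| ≤ A * B := by
    refine le_trans (abs_integral_le _) ?_
    refine le_trans ?_ (cs_integral hp hq hp2 hq2)
    apply integral_mono_of_nonneg (Filter.Eventually.of_forall fun x => abs_nonneg _)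
    · have hpabs : AEStronglyMeasurable (fun x => |p x|) μ := by
        have := hp.norm; simpa [Real.norm_eq_abs] using this
      have hqabs : AEStronglyMeasurable (fun x => |q x|) μ := by
        have := hq.norm; simpa [Real.norm_eq_abs] using this
      exact (mul_integrable hpabs hqabs (by simpa [sq_abs] using hp2)
        (by simpa [sq_abs] using hq2))
    · filter_upwards with x
      rw [abs_mul]
  have h1 : ∫ x, (p x - q x) ^ 2 ∂μ ≤ (A + B) ^ 2 := by
    rw [hexp, hP, hQ]
    have := neg_abs_le (∫ x, p x * q x ∂μ)
    nlinarith
  calc Real.sqrt (∫ x, (p x - q x) ^ 2 ∂μ) ≤ Real.sqrt ((A + B) ^ 2) :=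
        Real.sqrt_le_sqrt h1
    _ = A + B := Real.sqrt_sq (by positivity)

lemma ftc_identity (κj κj' : ℝ → ℝ) (K κmax : ℝ)
    (hD : ∀ y, HasDerivAt κj (κj' y) y)
    (hbd : ∀ y, |κj y| ≤ κmax) (hbd' : ∀ y, |κj' y| ≤ K) (a b c d : ℝ) :
    (∫ t in (0:ℝ)..1, κj (a + t * b)) * d
      + (∫ t in (0:ℝ)..1, κj' (a + t * b) * (c + t * d)) * b
      = κj (a + b) * (c + d) - κj a * c := by
  have hcont : Continuous κj := by
    have : Differentiable ℝ κj := fun y => (hD y).differentiableAt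
    exact this.continuous
  have hm' : Measurable fun t : ℝ => κj' (a + t * b) := by
    have h1 : (fun t : ℝ => κj' (a + t * b)) = (deriv κj) ∘ fun t : ℝ => a + t * b := by
      funext t; simp [Function.comp, (hD (a + t * b)).deriv]
    rw [h1]
    exact (measurable_deriv κj).comp (by measurability)
  -- the two summand functions
  set F1 : ℝ → ℝ := fun t => κj' (a + t * b) * b * (c + t * d) with hF1
  set F2 : ℝ → ℝ := fun t => κj (a + t * b) * d with hF2
  have hIF1 : IntervalIntegrable F1 volume 0 1 := by
    rw [intervalIntegrable_iff_integrableOn_Ioc_of_le zero_le_one]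
    refine Integrable.mono' (integrable_const (K * |b| * (|c| + |d|))) ?_ ?_
    · exact (((hm'.aestronglyMeasurable.mul aestronglyMeasurable_const).mul
        (aestronglyMeasurable_const.add
          (measurable_id.aestronglyMeasurable.mul aestronglyMeasurable_const)))).restrict
    · filter_upwards [ae_restrict_mem measurableSet_Ioc] with t ht
      have ht0 : 0 ≤ t := le_of_lt ht.1
      have ht1 : t ≤ 1 := ht.2
      rw [Real.norm_eq_abs, hF1, abs_mul, abs_mul]
      have h1 := hbd' (a + t * b)
      have h2 : |c + t * d| ≤ |c| + |d| := by
        calc |c + t * d| ≤ |c| + |t * d| := abs_add_le _ _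
          _ ≤ |c| + |d| := by
              rw [abs_mul]
              have : |t| ≤ 1 := by rw [abs_of_nonneg ht0]; exact ht1
              nlinarith [abs_nonneg d, abs_nonneg t]
      have hK : 0 ≤ K := le_trans (abs_nonneg _) h1
      calc |κj' (a + t * b)| * |b| * |c + t * d| ≤ (K * |b|) * (|c| + |d|) :=
            mul_le_mul (mul_le_mul_of_nonneg_right h1 (abs_nonneg b)) h2 (abs_nonneg _)
              (by positivity)
        _ = K * |b| * (|c| + |d|) := by ring
  have hIF2 : IntervalIntegrable F2 volume 0 1 := by
    rw [intervalIntegrable_iff_integrableOn_Ioc_of_le zero_le_one]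
    refine Integrable.mono' (integrable_const (κmax * |d|)) ?_ ?_
    · exact (((hcont.comp (by continuity : Continuous fun t : ℝ => a + t * b)).mul
        continuous_const).aestronglyMeasurable).restrict
    · filter_upwards with t
      rw [Real.norm_eq_abs, hF2, abs_mul]
      have h1 := hbd (a + t * b)
      have : 0 ≤ κmax := le_trans (abs_nonneg _) h1
      nlinarith [abs_nonneg d]
  have hg : ∀ t ∈ Set.uIcc (0:ℝ) 1, HasDerivAt (fun t => κj (a + t * b) * (c + t * d))
      (F1 t + F2 t) t := by
    intro t _
    have h1 : HasDerivAt (fun t : ℝ => a + t * b) b t := by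
      simpa using (hasDerivAt_mul_const b (x := t)).const_add a
    have h3 : HasDerivAt (fun t : ℝ => c + t * d) d t := by
      simpa using (hasDerivAt_mul_const d (x := t)).const_add c
    have h2 : HasDerivAt (fun t : ℝ => κj (a + t * b)) (κj' (a + t * b) * b) t := by
      have := (hD (a + t * b)).comp t h1
      exact this
    exact h2.mul h3
  have hFTC := intervalIntegral.integral_eq_sub_of_hasDerivAt hg (hIF1.add hIF2)
  have hsplit : ∫ t in (0:ℝ)..1, (F1 t + F2 t) = (∫ t in (0:ℝ)..1, F1 t)
      + ∫ t in (0:ℝ)..1, F2 t := intervalIntegral.integral_add hIF1 hIF2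
  have hF2val : ∫ t in (0:ℝ)..1, F2 t = (∫ t in (0:ℝ)..1, κj (a + t * b)) * d := by
    rw [hF2]; exact intervalIntegral.integral_mul_const d _
  have hF1val : ∫ t in (0:ℝ)..1, F1 t
      = (∫ t in (0:ℝ)..1, κj' (a + t * b) * (c + t * d)) * b := by
    rw [hF1, ← intervalIntegral.integral_mul_const]
    congr 1; funext t; ring
  rw [hsplit, hF1val, hF2val] at hFTC
  rw [add_comm]
  rw [hFTC]
  norm_num


/-- joint measurability of the partial derivative -/
lemma interval_to_restrict (g : ℝ → ℝ) :
    (∫ t in (0:ℝ)..1, g t) = ∫ t, g t ∂(volume.restrict (Set.Ioc (0:ℝ) 1)) := by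
  rw [intervalIntegral.integral_of_le zero_le_one]

lemma aesm_Kbar {S : Set ℝ} (κj : ℝ → ℝ → ℝ)
    (hκc : Continuous fun q : ℝ × ℝ => κj q.1 q.2) {u uh : ℝ → ℝ}
    (hu : AEMeasurable u (volume.restrict S)) (huh : AEMeasurable uh (volume.restrict S)) :
    AEStronglyMeasurable (fun x => ∫ t in (0:ℝ)..1, κj x (uh x + t * (u x - uh x)))
      (volume.restrict S) := by
  have hpair : AEMeasurable (fun q : ℝ × ℝ => (q.1, uh q.1 + q.2 * (u q.1 - uh q.1)))
      ((volume.restrict S).prod (volume.restrict (Set.Ioc (0:ℝ) 1))) :=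
    (measurable_fst.aemeasurable).prodMk
      (huh.comp_fst.add (measurable_snd.aemeasurable.mul (hu.comp_fst.sub huh.comp_fst)))
  have hF : AEStronglyMeasurable (fun q : ℝ × ℝ => κj q.1 (uh q.1 + q.2 * (u q.1 - uh q.1)))
      ((volume.restrict S).prod (volume.restrict (Set.Ioc (0:ℝ) 1))) :=
    (hκc.measurable.comp_aemeasurable hpair).aestronglyMeasurable
  have h2 := hF.integral_prod_right'
  have hfun : (fun x => ∫ t in (0:ℝ)..1, κj x (uh x + t * (u x - uh x)))
      = fun x => ∫ t, κj x (uh x + t * (u x - uh x)) ∂(volume.restrict (Set.Ioc (0:ℝ) 1)) :=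
    funext fun x => interval_to_restrict _
  rw [hfun]
  exact h2

lemma aesm_Q {S : Set ℝ} (κj κj' : ℝ → ℝ → ℝ)
    (hκc : Continuous fun q : ℝ × ℝ => κj q.1 q.2)
    (hD : ∀ x y, HasDerivAt (fun z => κj x z) (κj' x y) y) {u uh : ℝ → ℝ}
    (hu : AEMeasurable u (volume.restrict S)) (huh : AEMeasurable uh (volume.restrict S)) :
    AEStronglyMeasurable (fun x => ∫ t in (0:ℝ)..1,
        κj' x (uh x + t * (u x - uh x)) * (deriv uh x + t * (deriv u x - deriv uh x)))
      (volume.restrict S) := by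
  have hkm : Measurable fun q : ℝ × ℝ => κj' q.1 q.2 := kprime_measurable κj κj' hκc hD
  have hpair : AEMeasurable (fun q : ℝ × ℝ => (q.1, uh q.1 + q.2 * (u q.1 - uh q.1)))
      ((volume.restrict S).prod (volume.restrict (Set.Ioc (0:ℝ) 1))) :=
    (measurable_fst.aemeasurable).prodMk
      (huh.comp_fst.add (measurable_snd.aemeasurable.mul (hu.comp_fst.sub huh.comp_fst)))
  have hd1 : Measurable fun q : ℝ × ℝ => deriv uh q.1 :=
    (measurable_deriv uh).comp measurable_fst
  have hd2 : Measurable fun q : ℝ × ℝ => deriv u q.1 :=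
    (measurable_deriv u).comp measurable_fst
  have hF : AEStronglyMeasurable (fun q : ℝ × ℝ =>
      κj' q.1 (uh q.1 + q.2 * (u q.1 - uh q.1))
        * (deriv uh q.1 + q.2 * (deriv u q.1 - deriv uh q.1)))
      ((volume.restrict S).prod (volume.restrict (Set.Ioc (0:ℝ) 1))) :=
    ((hkm.comp_aemeasurable hpair).mul
      (hd1.aemeasurable.add (measurable_snd.aemeasurable.mul
        (hd2.aemeasurable.sub hd1.aemeasurable)))).aestronglyMeasurable
  have h2 := hF.integral_prod_right'
  have hfun : (fun x => ∫ t in (0:ℝ)..1,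
        κj' x (uh x + t * (u x - uh x)) * (deriv uh x + t * (deriv u x - deriv uh x)))
      = fun x => ∫ t, κj' x (uh x + t * (u x - uh x))
          * (deriv uh x + t * (deriv u x - deriv uh x))
          ∂(volume.restrict (Set.Ioc (0:ℝ) 1)) :=
    funext fun x => interval_to_restrict _
  rw [hfun]
  exact h2

lemma abs_param_le {g : ℝ → ℝ} {M : ℝ} (h : ∀ t ∈ Set.Ioc (0:ℝ) 1, |g t| ≤ M) :
    |∫ t in (0:ℝ)..1, g t| ≤ M := by
  have := intervalIntegral.norm_integral_le_of_norm_le_const (C := M) (f := g)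
    (a := (0:ℝ)) (b := 1) ?_
  · simpa using this
  · intro t ht
    rw [Real.norm_eq_abs]
    exact h t (by simpa [Set.uIoc_of_le (zero_le_one (α := ℝ))] using ht)

lemma Q_pointwise_bound {κj' : ℝ → ℝ → ℝ} {K : ℝ} (hK : ∀ x y, |κj' x y| ≤ K)
    (x a b c d : ℝ) :
    |∫ t in (0:ℝ)..1, κj' x (a + t * b) * (c + t * d)| ≤ K * (|c| + |d|) := by
  apply abs_param_le
  intro t ht
  rw [abs_mul]
  have h1 := hK x (a + t * b)
  have h2 : |c + t * d| ≤ |c| + |d| := by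
    calc |c + t * d| ≤ |c| + |t * d| := abs_add_le _ _
      _ ≤ |c| + |d| := by
          rw [abs_mul]
          have h3 : |t| ≤ 1 := by rw [abs_of_nonneg (le_of_lt ht.1)]; exact ht.2
          nlinarith [abs_nonneg d, abs_nonneg t]
  exact mul_le_mul h1 h2 (abs_nonneg _) (le_trans (abs_nonneg _) h1)

lemma ae_Ioo_restrict {L a b : ℝ} (ha : 0 ≤ a) (hb : b ≤ L) :
    ∀ᵐ x ∂(volume.restrict (Set.Ioc a b)), x ∈ Set.Ioo 0 L := by
  rw [ae_iff, Measure.restrict_apply' measurableSet_Ioc]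
  refine measure_mono_null ?_ (Real.volume_singleton (a := L))
  intro x hx
  simp only [Set.mem_inter_iff, Set.mem_setOf_eq, Set.mem_Ioc, Set.mem_Ioo] at hx
  have h1 : 0 < x := lt_of_le_of_lt ha hx.2.1
  have h2 : x ≤ L := le_trans hx.2.2 hb
  simp only [Set.mem_singleton_iff]
  rcases lt_or_eq_of_le h2 with h | h
  · exact absurd ⟨h1, h⟩ hx.1
  · exact h



section PerInterval

variable {L κmin κmax K : ℝ} {κj κj' : ℝ → ℝ → ℝ} {u uh e φ wh w : ℝ → ℝ} {a b : ℝ}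

/-- squares of H10 functions' derivatives restricted -/
lemma H10_dsq_int (hL : 0 < L) (ha : 0 ≤ a) (hbL : b ≤ L) (hw : w ∈ H10 L) :
    Integrable (fun x => deriv w x ^ 2) (volume.restrict (Set.Ioc a b)) :=
  ((intervalIntegrable_iff_integrableOn_Ioc_of_le hL.le).mp hw.2.2.2.2.2.1).mono_set
    (Set.Ioc_subset_Ioc ha hbL)

lemma H10_sq_int (hL : 0 < L) (ha : 0 ≤ a) (hbL : b ≤ L) (hw : w ∈ H10 L) :
    Integrable (fun x => w x ^ 2) (volume.restrict (Set.Ioc a b)) :=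
  ((intervalIntegrable_iff_integrableOn_Ioc_of_le hL.le).mp hw.2.2.2.2.2.2).mono_set
    (Set.Ioc_subset_Ioc ha hbL)

lemma H10_aem (ha : 0 ≤ a) (hbL : b ≤ L) (hw : w ∈ H10 L) :
    AEMeasurable w (volume.restrict (Set.Ioc a b)) :=
  (hw.1.mono ((Set.Ioc_subset_Ioc ha hbL).trans Set.Ioc_subset_Icc_self)).aemeasurable
    measurableSet_Ioc

lemma sq_sub_integrable {μ : Measure ℝ} {p q : ℝ → ℝ}
    (hp : AEStronglyMeasurable p μ) (hq : AEStronglyMeasurable q μ)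
    (hp2 : Integrable (fun x => p x ^ 2) μ) (hq2 : Integrable (fun x => q x ^ 2) μ) :
    Integrable (fun x => (p x - q x) ^ 2) μ := by
  refine Integrable.mono' ((hp2.add hq2).const_mul 2) ((hp.sub hq).pow 2) ?_
  filter_upwards with x
  rw [Real.norm_eq_abs, abs_of_nonneg (sq_nonneg _)]
  simp only [Pi.add_apply]
  nlinarith [sq_nonneg (p x + q x)]

/-- bound for the averaged coefficient -/
lemma Kbar_bound (hκmin : 0 < κmin) (hbdk : ∀ x y, κmin ≤ κj x y ∧ κj x y ≤ κmax) (x : ℝ) :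
    |∫ t in (0:ℝ)..1, κj x (uh x + t * (u x - uh x))| ≤ κmax := by
  apply abs_param_le
  intro t _
  have h := hbdk x (uh x + t * (u x - uh x))
  rw [abs_of_pos (lt_of_lt_of_le hκmin h.1)]
  exact h.2

/-- the per-interval FTC identity at the level of integrals -/
lemma perj_identity (hL : 0 < L) (ha : 0 ≤ a) (hab : a ≤ b) (hbL : b ≤ L)
    (hu : u ∈ H10 L) (huh : uh ∈ H10 L) (hw : w ∈ H10 L)
    (he : e = fun x => u x - uh x)
    (hκc : Continuous fun q : ℝ × ℝ => κj q.1 q.2)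
    (hκmin : 0 < κmin) (hbdk : ∀ x y, κmin ≤ κj x y ∧ κj x y ≤ κmax)
    (hD2 : ∀ x y, HasDerivAt (fun z => κj x z) (κj' x y) y)
    (hD2bd : ∀ x y, |κj' x y| ≤ K) :
    (∫ x in a..b, (∫ t in (0:ℝ)..1, κj x (uh x + t * (u x - uh x)))
        * deriv e x * deriv w x)
      + (∫ x in a..b, (∫ t in (0:ℝ)..1, κj' x (uh x + t * (u x - uh x))
          * (deriv uh x + t * (deriv u x - deriv uh x))) * e x * deriv w x)
      = (∫ x in a..b, κj x (u x) * deriv u x * deriv w x)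
        - ∫ x in a..b, κj x (uh x) * deriv uh x * deriv w x := by
  have hK0 : 0 ≤ K := le_trans (abs_nonneg _) (hD2bd 0 0)
  have hκmax : 0 ≤ κmax := le_trans hκmin.le (le_trans (hbdk 0 0).1 (hbdk 0 0).2)
  set μab := volume.restrict (Set.Ioc a b) with hμab
  have hsubI : Set.Ioc a b ⊆ Set.Ioc 0 L := Set.Ioc_subset_Ioc ha hbL
  have hsubC : Set.Ioc a b ⊆ Set.Icc 0 L := hsubI.trans Set.Ioc_subset_Icc_self
  have hmu : AEMeasurable u μab := H10_aem ha hbL hu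
  have hmuh : AEMeasurable uh μab := H10_aem ha hbL huh
  have hKb_asm := aesm_Kbar (S := Set.Ioc a b) κj hκc hmu hmuh
  have hQ_asm := aesm_Q (S := Set.Ioc a b) κj κj' hκc hD2 hmu hmuh
  have hdu2 := H10_dsq_int hL ha hbL hu
  have hduh2 := H10_dsq_int hL ha hbL huh
  have hdw2 := H10_dsq_int hL ha hbL hw
  have hmdu : AEStronglyMeasurable (deriv u) μab :=
    (measurable_deriv u).aestronglyMeasurable.restrict
  have hmduh : AEStronglyMeasurable (deriv uh) μab :=
    (measurable_deriv uh).aestronglyMeasurable.restrict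
  have hmdw : AEStronglyMeasurable (deriv w) μab :=
    (measurable_deriv w).aestronglyMeasurable.restrict
  have hdud2 : Integrable (fun x => (deriv u x - deriv uh x) ^ 2) μab :=
    sq_sub_integrable hmdu hmduh hdu2 hduh2
  -- bound for e on [0, L]
  obtain ⟨Me, hMe⟩ := (isCompact_Icc (a := (0:ℝ)) (b := L)).exists_bound_of_continuousOn
    (hu.1.sub huh.1)
  have hMe0 : 0 ≤ Me := le_trans (norm_nonneg _) (hMe 0 ⟨le_refl 0, hL.le⟩)
  -- integrabilities
  have iA' : Integrable (fun x =>
      (∫ t in (0:ℝ)..1, κj x (uh x + t * (u x - uh x)))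
        * (deriv u x - deriv uh x) * deriv w x) μab := by
    refine mul_integrable (hKb_asm.mul (hmdu.sub hmduh)) hmdw ?_ hdw2
    refine Integrable.mono' (hdud2.const_mul (κmax ^ 2)) ((hKb_asm.mul (hmdu.sub hmduh)).pow 2) ?_
    filter_upwards with x
    rw [Real.norm_eq_abs, abs_of_nonneg (sq_nonneg _)]
    have h1 := Kbar_bound (u := u) (uh := uh) hκmin hbdk x
    have h2 : (∫ t in (0:ℝ)..1, κj x (uh x + t * (u x - uh x))) ^ 2 ≤ κmax ^ 2 := by
      rw [← sq_abs]
      exact pow_le_pow_left₀ (abs_nonneg _) h1 2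
    calc ((∫ t in (0:ℝ)..1, κj x (uh x + t * (u x - uh x))) * (deriv u x - deriv uh x)) ^ 2
        = (∫ t in (0:ℝ)..1, κj x (uh x + t * (u x - uh x))) ^ 2
            * (deriv u x - deriv uh x) ^ 2 := by ring
      _ ≤ κmax ^ 2 * (deriv u x - deriv uh x) ^ 2 :=
          mul_le_mul_of_nonneg_right h2 (sq_nonneg _)
  have iB' : Integrable (fun x =>
      (∫ t in (0:ℝ)..1, κj' x (uh x + t * (u x - uh x))
        * (deriv uh x + t * (deriv u x - deriv uh x))) * (u x - uh x) * deriv w x) μab := by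
    refine mul_integrable (hQ_asm.mul (hmu.sub hmuh).aestronglyMeasurable) hmdw ?_ hdw2
    refine Integrable.mono' (((hduh2.add hdud2).const_mul (2 * (K * Me) ^ 2)))
      ((hQ_asm.mul (hmu.sub hmuh).aestronglyMeasurable).pow 2) ?_
    filter_upwards [ae_restrict_mem measurableSet_Ioc] with x hx
    rw [Real.norm_eq_abs, abs_of_nonneg (sq_nonneg _)]
    have h1 := Q_pointwise_bound (κj' := κj') hD2bd x (uh x) (u x - uh x) (deriv uh x)
      (deriv u x - deriv uh x)
    have h2 : |u x - uh x| ≤ Me := by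
      have := hMe x (hsubC hx)
      simpa [Real.norm_eq_abs] using this
    have h3 : |(∫ t in (0:ℝ)..1, κj' x (uh x + t * (u x - uh x))
        * (deriv uh x + t * (deriv u x - deriv uh x))) * (u x - uh x)|
        ≤ K * (|deriv uh x| + |deriv u x - deriv uh x|) * Me := by
      rw [abs_mul]
      exact mul_le_mul h1 h2 (abs_nonneg _) (by positivity)
    have h5 : ((∫ t in (0:ℝ)..1, κj' x (uh x + t * (u x - uh x))
        * (deriv uh x + t * (deriv u x - deriv uh x))) * (u x - uh x)) ^ 2
        ≤ (K * (|deriv uh x| + |deriv u x - deriv uh x|) * Me) ^ 2 := by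
      rw [← sq_abs]
      exact pow_le_pow_left₀ (abs_nonneg _) h3 2
    simp only [Pi.add_apply]
    nlinarith [h5, sq_nonneg (|deriv uh x| - |deriv u x - deriv uh x|),
      sq_abs (deriv uh x), sq_abs (deriv u x - deriv uh x),
      sq_nonneg (K * Me), sq_nonneg (deriv uh x), sq_nonneg (deriv u x - deriv uh x)]
  have hκu_asm : AEStronglyMeasurable (fun x => κj x (u x)) μab := by
    have hc : ContinuousOn (fun x => κj x (u x)) (Set.Icc 0 L) :=
      hκc.comp_continuousOn (continuousOn_id.prodMk hu.1)
    exact ((hc.mono hsubC).aemeasurable measurableSet_Ioc).aestronglyMeasurable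
  have hκuh_asm : AEStronglyMeasurable (fun x => κj x (uh x)) μab := by
    have hc : ContinuousOn (fun x => κj x (uh x)) (Set.Icc 0 L) :=
      hκc.comp_continuousOn (continuousOn_id.prodMk huh.1)
    exact ((hc.mono hsubC).aemeasurable measurableSet_Ioc).aestronglyMeasurable
  have iC : Integrable (fun x => κj x (u x) * deriv u x * deriv w x) μab := by
    refine mul_integrable (hκu_asm.mul hmdu) hmdw ?_ hdw2
    refine Integrable.mono' (hdu2.const_mul (κmax ^ 2)) ((hκu_asm.mul hmdu).pow 2) ?_
    filter_upwards with x
    rw [Real.norm_eq_abs, abs_of_nonneg (sq_nonneg _)]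
    have h1 := (hbdk x (u x)).1
    have h2 : κj x (u x) ^ 2 ≤ κmax ^ 2 :=
      pow_le_pow_left₀ (le_trans hκmin.le h1) (hbdk x (u x)).2 2
    calc (κj x (u x) * deriv u x) ^ 2 = κj x (u x) ^ 2 * deriv u x ^ 2 := by ring
      _ ≤ κmax ^ 2 * deriv u x ^ 2 := mul_le_mul_of_nonneg_right h2 (sq_nonneg _)
  have iD : Integrable (fun x => κj x (uh x) * deriv uh x * deriv w x) μab := by
    refine mul_integrable (hκuh_asm.mul hmduh) hmdw ?_ hdw2
    refine Integrable.mono' (hduh2.const_mul (κmax ^ 2)) ((hκuh_asm.mul hmduh).pow 2) ?_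
    filter_upwards with x
    rw [Real.norm_eq_abs, abs_of_nonneg (sq_nonneg _)]
    have h1 := (hbdk x (uh x)).1
    have h2 : κj x (uh x) ^ 2 ≤ κmax ^ 2 :=
      pow_le_pow_left₀ (le_trans hκmin.le h1) (hbdk x (uh x)).2 2
    calc (κj x (uh x) * deriv uh x) ^ 2 = κj x (uh x) ^ 2 * deriv uh x ^ 2 := by ring
      _ ≤ κmax ^ 2 * deriv uh x ^ 2 := mul_le_mul_of_nonneg_right h2 (sq_nonneg _)
  -- ae rewriting of deriv e
  have hae : ∀ᵐ x ∂μab, deriv e x = deriv u x - deriv uh x := by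
    filter_upwards [ae_Ioo_restrict (L := L) ha hbL] with x hx
    rw [he]
    exact deriv_sub (hu.2.2.2.1 x hx) (huh.2.2.2.1 x hx)
  -- pointwise FTC identity
  have key : ∀ x : ℝ,
      (∫ t in (0:ℝ)..1, κj x (uh x + t * (u x - uh x))) * (deriv u x - deriv uh x) * deriv w x
      + (∫ t in (0:ℝ)..1, κj' x (uh x + t * (u x - uh x))
          * (deriv uh x + t * (deriv u x - deriv uh x))) * (u x - uh x) * deriv w x
      = κj x (u x) * deriv u x * deriv w x - κj x (uh x) * deriv uh x * deriv w x := by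
    intro x
    have habs : ∀ y, |κj x y| ≤ κmax := by
      intro y
      rw [abs_of_pos (lt_of_lt_of_le hκmin (hbdk x y).1)]
      exact (hbdk x y).2
    have h := ftc_identity (κj x) (κj' x) K κmax (hD2 x) habs (hD2bd x)
      (uh x) (u x - uh x) (deriv uh x) (deriv u x - deriv uh x)
    rw [show uh x + (u x - uh x) = u x by ring,
      show deriv uh x + (deriv u x - deriv uh x) = deriv u x by ring] at h
    linear_combination (deriv w x) * h
  -- now the chain
  rw [intervalIntegral.integral_of_le hab, intervalIntegral.integral_of_le hab,
    intervalIntegral.integral_of_le hab, intervalIntegral.integral_of_le hab]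
  have hcong1 : ∫ x in Set.Ioc a b, (∫ t in (0:ℝ)..1, κj x (uh x + t * (u x - uh x)))
      * deriv e x * deriv w x
      = ∫ x in Set.Ioc a b, (∫ t in (0:ℝ)..1, κj x (uh x + t * (u x - uh x)))
      * (deriv u x - deriv uh x) * deriv w x := by
    apply integral_congr_ae
    filter_upwards [hae] with x hx
    rw [hx]
  have hcong2 : ∫ x in Set.Ioc a b, (∫ t in (0:ℝ)..1, κj' x (uh x + t * (u x - uh x))
        * (deriv uh x + t * (deriv u x - deriv uh x))) * e x * deriv w x
      = ∫ x in Set.Ioc a b, (∫ t in (0:ℝ)..1, κj' x (uh x + t * (u x - uh x))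
        * (deriv uh x + t * (deriv u x - deriv uh x))) * (u x - uh x) * deriv w x := by
    apply integral_congr_ae
    filter_upwards with x
    rw [he]
  rw [hcong1, hcong2, ← integral_add iA' iB', ← integral_sub iC iD]
  apply integral_congr_ae
  filter_upwards with x
  exact key x

/-- generic integrability of `Kbar · (u' - uh') · r` -/
lemma perj_intA (hL : 0 < L) (ha : 0 ≤ a) (hbL : b ≤ L)
    (hu : u ∈ H10 L) (huh : uh ∈ H10 L)
    (hκc : Continuous fun q : ℝ × ℝ => κj q.1 q.2)
    (hκmin : 0 < κmin) (hbdk : ∀ x y, κmin ≤ κj x y ∧ κj x y ≤ κmax)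
    {r : ℝ → ℝ} (hr : AEStronglyMeasurable r (volume.restrict (Set.Ioc a b)))
    (hr2 : Integrable (fun x => r x ^ 2) (volume.restrict (Set.Ioc a b))) :
    Integrable (fun x => (∫ t in (0:ℝ)..1, κj x (uh x + t * (u x - uh x)))
      * (deriv u x - deriv uh x) * r x) (volume.restrict (Set.Ioc a b)) := by
  set μab := volume.restrict (Set.Ioc a b) with hμab
  have hmu : AEMeasurable u μab := H10_aem ha hbL hu
  have hmuh : AEMeasurable uh μab := H10_aem ha hbL huh
  have hKb_asm := aesm_Kbar (S := Set.Ioc a b) κj hκc hmu hmuh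
  have hmdu : AEStronglyMeasurable (deriv u) μab :=
    (measurable_deriv u).aestronglyMeasurable.restrict
  have hmduh : AEStronglyMeasurable (deriv uh) μab :=
    (measurable_deriv uh).aestronglyMeasurable.restrict
  have hdud2 : Integrable (fun x => (deriv u x - deriv uh x) ^ 2) μab :=
    sq_sub_integrable hmdu hmduh (H10_dsq_int hL ha hbL hu) (H10_dsq_int hL ha hbL huh)
  refine mul_integrable (hKb_asm.mul (hmdu.sub hmduh)) hr ?_ hr2
  refine Integrable.mono' (hdud2.const_mul (κmax ^ 2))
    ((hKb_asm.mul (hmdu.sub hmduh)).pow 2) ?_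
  filter_upwards with x
  rw [Real.norm_eq_abs, abs_of_nonneg (sq_nonneg _)]
  have h1 := Kbar_bound (u := u) (uh := uh) hκmin hbdk x
  have h2 : (∫ t in (0:ℝ)..1, κj x (uh x + t * (u x - uh x))) ^ 2 ≤ κmax ^ 2 := by
    rw [← sq_abs]
    exact pow_le_pow_left₀ (abs_nonneg _) h1 2
  calc ((∫ t in (0:ℝ)..1, κj x (uh x + t * (u x - uh x))) * (deriv u x - deriv uh x)) ^ 2
      = (∫ t in (0:ℝ)..1, κj x (uh x + t * (u x - uh x))) ^ 2
          * (deriv u x - deriv uh x) ^ 2 := by ring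
    _ ≤ κmax ^ 2 * (deriv u x - deriv uh x) ^ 2 :=
        mul_le_mul_of_nonneg_right h2 (sq_nonneg _)

/-- generic integrability of `Q · (u - uh) · r` -/
lemma perj_intB (hL : 0 < L) (ha : 0 ≤ a) (hbL : b ≤ L)
    (hu : u ∈ H10 L) (huh : uh ∈ H10 L)
    (hκc : Continuous fun q : ℝ × ℝ => κj q.1 q.2)
    (hD2 : ∀ x y, HasDerivAt (fun z => κj x z) (κj' x y) y)
    (hD2bd : ∀ x y, |κj' x y| ≤ K)
    {r : ℝ → ℝ} (hr : AEStronglyMeasurable r (volume.restrict (Set.Ioc a b)))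
    (hr2 : Integrable (fun x => r x ^ 2) (volume.restrict (Set.Ioc a b))) :
    Integrable (fun x => (∫ t in (0:ℝ)..1, κj' x (uh x + t * (u x - uh x))
      * (deriv uh x + t * (deriv u x - deriv uh x))) * (u x - uh x) * r x)
      (volume.restrict (Set.Ioc a b)) := by
  set μab := volume.restrict (Set.Ioc a b) with hμab
  have hK0 : 0 ≤ K := le_trans (abs_nonneg _) (hD2bd 0 0)
  have hsubC : Set.Ioc a b ⊆ Set.Icc 0 L :=
    (Set.Ioc_subset_Ioc ha hbL).trans Set.Ioc_subset_Icc_self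
  have hmu : AEMeasurable u μab := H10_aem ha hbL hu
  have hmuh : AEMeasurable uh μab := H10_aem ha hbL huh
  have hQ_asm := aesm_Q (S := Set.Ioc a b) κj κj' hκc hD2 hmu hmuh
  have hmdu : AEStronglyMeasurable (deriv u) μab :=
    (measurable_deriv u).aestronglyMeasurable.restrict
  have hmduh : AEStronglyMeasurable (deriv uh) μab :=
    (measurable_deriv uh).aestronglyMeasurable.restrict
  have hduh2 := H10_dsq_int hL ha hbL huh
  have hdud2 : Integrable (fun x => (deriv u x - deriv uh x) ^ 2) μab :=
    sq_sub_integrable hmdu hmduh (H10_dsq_int hL ha hbL hu) hduh2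
  obtain ⟨Me, hMe⟩ := (isCompact_Icc (a := (0:ℝ)) (b := L)).exists_bound_of_continuousOn
    (hu.1.sub huh.1)
  have hMe0 : 0 ≤ Me := le_trans (norm_nonneg _) (hMe 0 ⟨le_refl 0, hL.le⟩)
  refine mul_integrable (hQ_asm.mul (hmu.sub hmuh).aestronglyMeasurable) hr ?_ hr2
  refine Integrable.mono' (((hduh2.add hdud2).const_mul (2 * (K * Me) ^ 2)))
    ((hQ_asm.mul (hmu.sub hmuh).aestronglyMeasurable).pow 2) ?_
  filter_upwards [ae_restrict_mem measurableSet_Ioc] with x hx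
  rw [Real.norm_eq_abs, abs_of_nonneg (sq_nonneg _)]
  have h1 := Q_pointwise_bound (κj' := κj') hD2bd x (uh x) (u x - uh x) (deriv uh x)
    (deriv u x - deriv uh x)
  have h2 : |u x - uh x| ≤ Me := by
    have := hMe x (hsubC hx)
    simpa [Real.norm_eq_abs] using this
  have h3 : |(∫ t in (0:ℝ)..1, κj' x (uh x + t * (u x - uh x))
      * (deriv uh x + t * (deriv u x - deriv uh x))) * (u x - uh x)|
      ≤ K * (|deriv uh x| + |deriv u x - deriv uh x|) * Me := by
    rw [abs_mul]
    exact mul_le_mul h1 h2 (abs_nonneg _) (by positivity)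
  have h5 : ((∫ t in (0:ℝ)..1, κj' x (uh x + t * (u x - uh x))
      * (deriv uh x + t * (deriv u x - deriv uh x))) * (u x - uh x)) ^ 2
      ≤ (K * (|deriv uh x| + |deriv u x - deriv uh x|) * Me) ^ 2 := by
    rw [← sq_abs]
    exact pow_le_pow_left₀ (abs_nonneg _) h3 2
  simp only [Pi.add_apply]
  nlinarith [h5, sq_nonneg (|deriv uh x| - |deriv u x - deriv uh x|),
    sq_abs (deriv uh x), sq_abs (deriv u x - deriv uh x),
    sq_nonneg (K * Me), sq_nonneg (deriv uh x), sq_nonneg (deriv u x - deriv uh x)]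

lemma perj_splitA (hL : 0 < L) (ha : 0 ≤ a) (hab : a ≤ b) (hbL : b ≤ L)
    (hu : u ∈ H10 L) (huh : uh ∈ H10 L) (hφ : φ ∈ H10 L) (hwh : wh ∈ H10 L)
    (he : e = fun x => u x - uh x)
    (hκc : Continuous fun q : ℝ × ℝ => κj q.1 q.2)
    (hκmin : 0 < κmin) (hbdk : ∀ x y, κmin ≤ κj x y ∧ κj x y ≤ κmax) :
    (∫ x in a..b, (∫ t in (0:ℝ)..1, κj x (uh x + t * (u x - uh x)))
        * deriv e x * deriv φ x)
    = (∫ x in Set.Ioc a b, (∫ t in (0:ℝ)..1, κj x (uh x + t * (u x - uh x)))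
        * (deriv u x - deriv uh x) * (deriv φ x - deriv wh x))
      + ∫ x in a..b, (∫ t in (0:ℝ)..1, κj x (uh x + t * (u x - uh x)))
          * deriv e x * deriv wh x := by
  set μab := volume.restrict (Set.Ioc a b) with hμab
  have hmdφ : AEStronglyMeasurable (deriv φ) μab :=
    (measurable_deriv φ).aestronglyMeasurable.restrict
  have hmdwh : AEStronglyMeasurable (deriv wh) μab :=
    (measurable_deriv wh).aestronglyMeasurable.restrict
  have hdφ2 := H10_dsq_int hL ha hbL hφ
  have hdwh2 := H10_dsq_int hL ha hbL hwh
  have hψ2 : Integrable (fun x => (deriv φ x - deriv wh x) ^ 2) μab :=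
    sq_sub_integrable hmdφ hmdwh hdφ2 hdwh2
  have hψm : AEStronglyMeasurable (fun x => deriv φ x - deriv wh x) μab := hmdφ.sub hmdwh
  have i1 := perj_intA (κj := κj) hL ha hbL hu huh hκc hκmin hbdk hψm hψ2
  have i2 := perj_intA (κj := κj) hL ha hbL hu huh hκc hκmin hbdk hmdwh hdwh2
  have hae : ∀ᵐ x ∂μab, deriv e x = deriv u x - deriv uh x := by
    filter_upwards [ae_Ioo_restrict (L := L) ha hbL] with x hx
    rw [he]
    exact deriv_sub (hu.2.2.2.1 x hx) (huh.2.2.2.1 x hx)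
  rw [intervalIntegral.integral_of_le hab, intervalIntegral.integral_of_le hab]
  have hcong1 : ∫ x in Set.Ioc a b, (∫ t in (0:ℝ)..1, κj x (uh x + t * (u x - uh x)))
      * deriv e x * deriv φ x
      = ∫ x in Set.Ioc a b, (∫ t in (0:ℝ)..1, κj x (uh x + t * (u x - uh x)))
      * (deriv u x - deriv uh x) * deriv φ x := by
    apply integral_congr_ae
    filter_upwards [hae] with x hx
    rw [hx]
  have hcong2 : ∫ x in Set.Ioc a b, (∫ t in (0:ℝ)..1, κj x (uh x + t * (u x - uh x)))
      * deriv e x * deriv wh x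
      = ∫ x in Set.Ioc a b, (∫ t in (0:ℝ)..1, κj x (uh x + t * (u x - uh x)))
      * (deriv u x - deriv uh x) * deriv wh x := by
    apply integral_congr_ae
    filter_upwards [hae] with x hx
    rw [hx]
  rw [hcong1, hcong2, ← integral_add i1 i2]
  apply integral_congr_ae
  filter_upwards with x
  ring

lemma perj_splitB (hL : 0 < L) (ha : 0 ≤ a) (hab : a ≤ b) (hbL : b ≤ L)
    (hu : u ∈ H10 L) (huh : uh ∈ H10 L) (hφ : φ ∈ H10 L) (hwh : wh ∈ H10 L)
    (he : e = fun x => u x - uh x)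
    (hκc : Continuous fun q : ℝ × ℝ => κj q.1 q.2)
    (hD2 : ∀ x y, HasDerivAt (fun z => κj x z) (κj' x y) y)
    (hD2bd : ∀ x y, |κj' x y| ≤ K) :
    (∫ x in a..b, (∫ t in (0:ℝ)..1, κj' x (uh x + t * (u x - uh x))
        * (deriv uh x + t * (deriv u x - deriv uh x))) * e x * deriv φ x)
    = (∫ x in Set.Ioc a b, (∫ t in (0:ℝ)..1, κj' x (uh x + t * (u x - uh x))
        * (deriv uh x + t * (deriv u x - deriv uh x))) * (u x - uh x)
          * (deriv φ x - deriv wh x))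
      + ∫ x in a..b, (∫ t in (0:ℝ)..1, κj' x (uh x + t * (u x - uh x))
          * (deriv uh x + t * (deriv u x - deriv uh x))) * e x * deriv wh x := by
  set μab := volume.restrict (Set.Ioc a b) with hμab
  have hmdφ : AEStronglyMeasurable (deriv φ) μab :=
    (measurable_deriv φ).aestronglyMeasurable.restrict
  have hmdwh : AEStronglyMeasurable (deriv wh) μab :=
    (measurable_deriv wh).aestronglyMeasurable.restrict
  have hdφ2 := H10_dsq_int hL ha hbL hφ
  have hdwh2 := H10_dsq_int hL ha hbL hwh
  have hψ2 : Integrable (fun x => (deriv φ x - deriv wh x) ^ 2) μab :=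
    sq_sub_integrable hmdφ hmdwh hdφ2 hdwh2
  have hψm : AEStronglyMeasurable (fun x => deriv φ x - deriv wh x) μab := hmdφ.sub hmdwh
  have i1 := perj_intB (κj := κj) (κj' := κj') hL ha hbL hu huh hκc hD2 hD2bd hψm hψ2
  have i2 := perj_intB (κj := κj) (κj' := κj') hL ha hbL hu huh hκc hD2 hD2bd hmdwh hdwh2
  rw [intervalIntegral.integral_of_le hab, intervalIntegral.integral_of_le hab]
  have hcong1 : ∀ r : ℝ → ℝ, ∫ x in Set.Ioc a b,
      (∫ t in (0:ℝ)..1, κj' x (uh x + t * (u x - uh x))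
        * (deriv uh x + t * (deriv u x - deriv uh x))) * e x * r x
      = ∫ x in Set.Ioc a b, (∫ t in (0:ℝ)..1, κj' x (uh x + t * (u x - uh x))
        * (deriv uh x + t * (deriv u x - deriv uh x))) * (u x - uh x) * r x := by
    intro r
    apply integral_congr_ae
    filter_upwards with x
    rw [he]
  rw [hcong1, hcong1, ← integral_add i1 i2]
  apply integral_congr_ae
  filter_upwards with x
  ring

lemma perj_bound1 (hL : 0 < L) (ha : 0 ≤ a) (hab : a ≤ b) (hbL : b ≤ L)
    (hu : u ∈ H10 L) (huh : uh ∈ H10 L) (hφ : φ ∈ H10 L) (hwh : wh ∈ H10 L)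
    (hκc : Continuous fun q : ℝ × ℝ => κj q.1 q.2)
    (hκmin : 0 < κmin) (hbdk : ∀ x y, κmin ≤ κj x y ∧ κj x y ≤ κmax) :
    |∫ x in Set.Ioc a b, (∫ t in (0:ℝ)..1, κj x (uh x + t * (u x - uh x)))
        * (deriv u x - deriv uh x) * (deriv φ x - deriv wh x)|
    ≤ κmax * ∫ x in Set.Ioc a b,
        |deriv u x - deriv uh x| * |deriv φ x - deriv wh x| := by
  set μab := volume.restrict (Set.Ioc a b) with hμab
  have hmdφ : AEStronglyMeasurable (deriv φ) μab :=
    (measurable_deriv φ).aestronglyMeasurable.restrict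
  have hmdwh : AEStronglyMeasurable (deriv wh) μab :=
    (measurable_deriv wh).aestronglyMeasurable.restrict
  have hmdu : AEStronglyMeasurable (deriv u) μab :=
    (measurable_deriv u).aestronglyMeasurable.restrict
  have hmduh : AEStronglyMeasurable (deriv uh) μab :=
    (measurable_deriv uh).aestronglyMeasurable.restrict
  have hψ2 : Integrable (fun x => (deriv φ x - deriv wh x) ^ 2) μab :=
    sq_sub_integrable hmdφ hmdwh (H10_dsq_int hL ha hbL hφ) (H10_dsq_int hL ha hbL hwh)
  have hdud2 : Integrable (fun x => (deriv u x - deriv uh x) ^ 2) μab :=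
    sq_sub_integrable hmdu hmduh (H10_dsq_int hL ha hbL hu) (H10_dsq_int hL ha hbL huh)
  have hψm : AEStronglyMeasurable (fun x => deriv φ x - deriv wh x) μab := hmdφ.sub hmdwh
  have i1 := perj_intA (κj := κj) hL ha hbL hu huh hκc hκmin hbdk hψm hψ2
  have habs1 : AEStronglyMeasurable (fun x => |deriv u x - deriv uh x|) μab := by
    have := (hmdu.sub hmduh).norm
    simpa [Real.norm_eq_abs] using this
  have habs2 : AEStronglyMeasurable (fun x => |deriv φ x - deriv wh x|) μab := by
    have := (hmdφ.sub hmdwh).norm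
    simpa [Real.norm_eq_abs] using this
  have iG : Integrable (fun x => |deriv u x - deriv uh x| * |deriv φ x - deriv wh x|) μab :=
    mul_integrable habs1 habs2 (by simpa [sq_abs] using hdud2) (by simpa [sq_abs] using hψ2)
  refine le_trans (abs_integral_le _) ?_
  rw [← MeasureTheory.integral_const_mul]
  refine integral_mono_ae i1.abs (iG.const_mul κmax) ?_
  filter_upwards with x
  rw [abs_mul, abs_mul]
  have h1 := Kbar_bound (u := u) (uh := uh) hκmin hbdk x
  calc |∫ t in (0:ℝ)..1, κj x (uh x + t * (u x - uh x))| * |deriv u x - deriv uh x|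
        * |deriv φ x - deriv wh x|
      ≤ κmax * |deriv u x - deriv uh x| * |deriv φ x - deriv wh x| := by
        apply mul_le_mul_of_nonneg_right _ (abs_nonneg _)
        exact mul_le_mul_of_nonneg_right h1 (abs_nonneg _)
    _ = κmax * (|deriv u x - deriv uh x| * |deriv φ x - deriv wh x|) := by ring

lemma perj_bound2 (hL : 0 < L) (ha : 0 ≤ a) (hab : a ≤ b) (hbL : b ≤ L)
    (hu : u ∈ H10 L) (huh : uh ∈ H10 L) (hφ : φ ∈ H10 L) (hwh : wh ∈ H10 L)
    (hκc : Continuous fun q : ℝ × ℝ => κj q.1 q.2)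
    (hD2 : ∀ x y, HasDerivAt (fun z => κj x z) (κj' x y) y)
    (hD2bd : ∀ x y, |κj' x y| ≤ K)
    {Me : ℝ} (hMe0 : 0 ≤ Me) (hMee : ∀ x ∈ Set.Icc (0:ℝ) L, |u x - uh x| ≤ Me) :
    |∫ x in Set.Ioc a b, (∫ t in (0:ℝ)..1, κj' x (uh x + t * (u x - uh x))
        * (deriv uh x + t * (deriv u x - deriv uh x))) * (u x - uh x)
          * (deriv φ x - deriv wh x)|
    ≤ K * Me * ∫ x in Set.Ioc a b,
        (|deriv uh x| + |deriv u x - deriv uh x|) * |deriv φ x - deriv wh x| := by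
  set μab := volume.restrict (Set.Ioc a b) with hμab
  have hK0 : 0 ≤ K := le_trans (abs_nonneg _) (hD2bd 0 0)
  have hsubC : Set.Ioc a b ⊆ Set.Icc 0 L :=
    (Set.Ioc_subset_Ioc ha hbL).trans Set.Ioc_subset_Icc_self
  have hmdφ : AEStronglyMeasurable (deriv φ) μab :=
    (measurable_deriv φ).aestronglyMeasurable.restrict
  have hmdwh : AEStronglyMeasurable (deriv wh) μab :=
    (measurable_deriv wh).aestronglyMeasurable.restrict
  have hmdu : AEStronglyMeasurable (deriv u) μab :=
    (measurable_deriv u).aestronglyMeasurable.restrict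
  have hmduh : AEStronglyMeasurable (deriv uh) μab :=
    (measurable_deriv uh).aestronglyMeasurable.restrict
  have hψ2 : Integrable (fun x => (deriv φ x - deriv wh x) ^ 2) μab :=
    sq_sub_integrable hmdφ hmdwh (H10_dsq_int hL ha hbL hφ) (H10_dsq_int hL ha hbL hwh)
  have hduh2 := H10_dsq_int hL ha hbL huh
  have hdud2 : Integrable (fun x => (deriv u x - deriv uh x) ^ 2) μab :=
    sq_sub_integrable hmdu hmduh (H10_dsq_int hL ha hbL hu) hduh2
  have hψm : AEStronglyMeasurable (fun x => deriv φ x - deriv wh x) μab := hmdφ.sub hmdwh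
  have i1 := perj_intB (κj := κj) (κj' := κj') hL ha hbL hu huh hκc hD2 hD2bd hψm hψ2
  have habs1 : AEStronglyMeasurable (fun x => |deriv uh x| + |deriv u x - deriv uh x|) μab := by
    have h1 := hmduh.norm
    have h2 := (hmdu.sub hmduh).norm
    simpa [Real.norm_eq_abs, Pi.add_def] using h1.add h2
  have habs2 : AEStronglyMeasurable (fun x => |deriv φ x - deriv wh x|) μab := by
    have := (hmdφ.sub hmdwh).norm
    simpa [Real.norm_eq_abs] using this
  have hsum2 : Integrable (fun x => (|deriv uh x| + |deriv u x - deriv uh x|) ^ 2) μab := by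
    refine Integrable.mono' ((hduh2.add hdud2).const_mul 2) (habs1.pow 2) ?_
    filter_upwards with x
    rw [Real.norm_eq_abs, abs_of_nonneg (sq_nonneg _)]
    simp only [Pi.add_apply]
    nlinarith [sq_nonneg (|deriv uh x| - |deriv u x - deriv uh x|),
      sq_abs (deriv uh x), sq_abs (deriv u x - deriv uh x)]
  have iH : Integrable (fun x => (|deriv uh x| + |deriv u x - deriv uh x|)
      * |deriv φ x - deriv wh x|) μab :=
    mul_integrable habs1 habs2 hsum2 (by simpa [sq_abs] using hψ2)
  refine le_trans (abs_integral_le _) ?_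
  rw [← MeasureTheory.integral_const_mul]
  refine integral_mono_ae i1.abs (iH.const_mul (K * Me)) ?_
  filter_upwards [ae_restrict_mem measurableSet_Ioc] with x hx
  have h1 := Q_pointwise_bound (κj' := κj') hD2bd x (uh x) (u x - uh x) (deriv uh x)
    (deriv u x - deriv uh x)
  have h2 : |u x - uh x| ≤ Me := hMee x (hsubC hx)
  rw [abs_mul, abs_mul]
  calc |∫ t in (0:ℝ)..1, κj' x (uh x + t * (u x - uh x))
        * (deriv uh x + t * (deriv u x - deriv uh x))| * |u x - uh x|
        * |deriv φ x - deriv wh x|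
      ≤ (K * (|deriv uh x| + |deriv u x - deriv uh x|) * Me) * |deriv φ x - deriv wh x| := by
        apply mul_le_mul_of_nonneg_right _ (abs_nonneg _)
        exact mul_le_mul h1 h2 (abs_nonneg _) (by positivity)
    _ = K * Me * ((|deriv uh x| + |deriv u x - deriv uh x|) * |deriv φ x - deriv wh x|) := by
        ring

/-- integrability of `κ(x, z x) · z' · r` -/
lemma perj_intC {z : ℝ → ℝ} (hL : 0 < L) (ha : 0 ≤ a) (hbL : b ≤ L)
    (hz : z ∈ H10 L)
    (hκc : Continuous fun q : ℝ × ℝ => κj q.1 q.2)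
    (hκmin : 0 < κmin) (hbdk : ∀ x y, κmin ≤ κj x y ∧ κj x y ≤ κmax)
    {r : ℝ → ℝ} (hr : AEStronglyMeasurable r (volume.restrict (Set.Ioc a b)))
    (hr2 : Integrable (fun x => r x ^ 2) (volume.restrict (Set.Ioc a b))) :
    Integrable (fun x => κj x (z x) * deriv z x * r x) (volume.restrict (Set.Ioc a b)) := by
  set μab := volume.restrict (Set.Ioc a b) with hμab
  have hsubC : Set.Ioc a b ⊆ Set.Icc 0 L :=
    (Set.Ioc_subset_Ioc ha hbL).trans Set.Ioc_subset_Icc_self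
  have hmdz : AEStronglyMeasurable (deriv z) μab :=
    (measurable_deriv z).aestronglyMeasurable.restrict
  have hdz2 := H10_dsq_int hL ha hbL hz
  have hκz_asm : AEStronglyMeasurable (fun x => κj x (z x)) μab := by
    have hc : ContinuousOn (fun x => κj x (z x)) (Set.Icc 0 L) :=
      hκc.comp_continuousOn (continuousOn_id.prodMk hz.1)
    exact ((hc.mono hsubC).aemeasurable measurableSet_Ioc).aestronglyMeasurable
  refine mul_integrable (hκz_asm.mul hmdz) hr ?_ hr2
  refine Integrable.mono' (hdz2.const_mul (κmax ^ 2)) ((hκz_asm.mul hmdz).pow 2) ?_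
  filter_upwards with x
  rw [Real.norm_eq_abs, abs_of_nonneg (sq_nonneg _)]
  have h2 : κj x (z x) ^ 2 ≤ κmax ^ 2 :=
    pow_le_pow_left₀ (le_trans hκmin.le (hbdk x (z x)).1) (hbdk x (z x)).2 2
  calc (κj x (z x) * deriv z x) ^ 2 = κj x (z x) ^ 2 * deriv z x ^ 2 := by ring
    _ ≤ κmax ^ 2 * deriv z x ^ 2 := mul_le_mul_of_nonneg_right h2 (sq_nonneg _)

end PerInterval

set_option maxHeartbeats 2000000 in
/-- the duality (Aubin–Nitsche) estimate
`‖u − ũ_h‖² ≤ C |φ − w̃_h|₁ |u − ũ_h|₁` for all `w̃_h ∈ Ṽ_h`, where `φ ∈ H¹₀` solves the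
linearized adjoint problem with data `u − ũ_h`, and `C` is independent of `u` and `h`. -/
theorem stmt15 (L : ℝ) (hL : 0 < L) (m : ℕ) (s : ℕ → ℝ)
    (hs0 : s 0 = 0) (hsm : s (m + 1) = L) (hmono : ∀ j ≤ m, s j < s (j + 1))
    (κmin κmax CL K C₀ CΩ : ℝ) (hκmin : 0 < κmin) (hκle : κmin ≤ κmax)
    (hCL : 0 ≤ CL) (hK : 0 ≤ K) (hC0 : 0 < C₀) (hCΩ : 0 ≤ CΩ)
    (κ κ' : ℕ → ℝ → ℝ → ℝ)
    (hκcont : ∀ j, Continuous (fun q : ℝ × ℝ => κ j q.1 q.2))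
    (hbd : ∀ j x y, κmin ≤ κ j x y ∧ κ j x y ≤ κmax)
    (hlip : ∀ j x y₁ y₂, |κ j x y₁ - κ j x y₂| ≤ CL * |y₁ - y₂|)
    (hD2 : ∀ j x y, HasDerivAt (fun z => κ j x z) (κ' j x y) y)
    (hD2bd : ∀ j x y, |κ' j x y| ≤ K)
    -- embedding `‖w‖_∞ ≤ C_Ω |w|₁` on `H¹₀(0, L)`
    (hemb : ∀ w ∈ H10 L, ∀ x ∈ Set.Icc 0 L,
      |w x| ≤ CΩ * Real.sqrt (∫ y in (0:ℝ)..L, (deriv w y) ^ 2))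
    (f : ℝ → ℝ)
    (hf : IntervalIntegrable f volume 0 L)
    (hf2 : IntervalIntegrable (fun x => (f x) ^ 2) volume 0 L) :
    ∃ C > 0, ∀ (u uh φ : ℝ → ℝ) (V : Submodule ℝ (ℝ → ℝ)),
      u ∈ H10 L → (∀ w ∈ V, w ∈ H10 L) → uh ∈ V → φ ∈ H10 L →
      -- `u` is the weak solution and `uh` the Galerkin solution
      (∀ w ∈ H10 L, formA m s κ u u w = ∫ x in (0:ℝ)..L, f x * w x) →
      (∀ w ∈ V, formA m s κ uh uh w = ∫ x in (0:ℝ)..L, f x * w x) →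
      -- a priori bound `‖uh‖₁ ≤ C₀⁻¹ ‖f‖`
      (Real.sqrt ((∫ x in (0:ℝ)..L, (uh x) ^ 2) + ∫ x in (0:ℝ)..L, (deriv (uh) x) ^ 2) ≤
        C₀⁻¹ * Real.sqrt (∫ x in (0:ℝ)..L, (f x) ^ 2)) →
      -- `φ` solves the linearized adjoint problem with data `u − uh`
      (∀ v ∈ H10 L,
        formAbar m s κ uh u v φ + formBbar m s κ' uh u v φ =
          ∫ x in (0:ℝ)..L, v x * (u x - uh x)) →
      ∀ wh ∈ V,
        (∫ x in (0:ℝ)..L, (u x - uh x) ^ 2) ≤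
          C * Real.sqrt (∫ x in (0:ℝ)..L, (deriv φ x - deriv wh x) ^ 2) *
            Real.sqrt (∫ x in (0:ℝ)..L, (deriv u x - deriv uh x) ^ 2) := by
  classical
  set Fn := Real.sqrt (∫ x in (0:ℝ)..L, (f x) ^ 2) with hFnDef
  have hFn : 0 ≤ Fn := Real.sqrt_nonneg _
  set Mu := Real.sqrt L * CΩ * Fn / κmin with hMuDef
  set Mh := C₀⁻¹ * Fn with hMhDef
  have hMu0 : 0 ≤ Mu :=
    div_nonneg (mul_nonneg (mul_nonneg (Real.sqrt_nonneg L) hCΩ) hFn) hκmin.le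
  have hMh0 : 0 ≤ Mh := mul_nonneg (inv_nonneg.mpr hC0.le) hFn
  have hκmax : 0 < κmax := lt_of_lt_of_le hκmin hκle
  have hCpos : 0 < κmax + K * CΩ * (Mh + (Mu + Mh)) + 1 := by
    have h2 : 0 ≤ K * CΩ * (Mh + (Mu + Mh)) :=
      mul_nonneg (mul_nonneg hK hCΩ) (by linarith)
    linarith
  refine ⟨κmax + K * CΩ * (Mh + (Mu + Mh)) + 1, hCpos, ?_⟩
  intro u uh φ V huH hVsub huhV hφH hweak hgal hpri hadj wh hwhV
  have huhH : uh ∈ H10 L := hVsub uh huhV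
  have hwhH : wh ∈ H10 L := hVsub wh hwhV
  -- partition facts
  have hmo : ∀ j k : ℕ, j ≤ k → k ≤ m + 1 → s j ≤ s k := by
    intro j k hjk hk
    induction k, hjk using Nat.le_induction with
    | base => exact le_rfl
    | succ n hn ih =>
        have hn' : n ≤ m := by omega
        exact le_trans (ih (by omega)) (hmono n hn').le
  have hs_nonneg : ∀ j, j ≤ m + 1 → 0 ≤ s j := by
    intro j hj
    have h := hmo 0 j (Nat.zero_le _) hj
    rw [hs0] at h
    exact h
  have hs_le : ∀ j, j ≤ m + 1 → s j ≤ L := by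
    intro j hj
    have h := hmo j (m + 1) hj le_rfl
    rw [hsm] at h
    exact h
  set μ0 := volume.restrict (Set.Ioc (0:ℝ) L) with hμ0
  have hIoc : ∀ g : ℝ → ℝ, (∫ x in (0:ℝ)..L, g x) = ∫ x, g x ∂μ0 := fun g =>
    intervalIntegral.integral_of_le hL.le
  -- e and its membership
  set e : ℝ → ℝ := fun x => u x - uh x with he
  have hdud_ae : ∀ᵐ x ∂μ0, deriv e x = deriv u x - deriv uh x := by
    filter_upwards [ae_Ioo_restrict (L := L) (le_refl (0:ℝ)) (le_refl L)] with x hx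
    rw [he]
    exact deriv_sub (huH.2.2.2.1 x hx) (huhH.2.2.2.1 x hx)
  have hmdu0 : AEStronglyMeasurable (deriv u) μ0 :=
    (measurable_deriv u).aestronglyMeasurable.restrict
  have hmduh0 : AEStronglyMeasurable (deriv uh) μ0 :=
    (measurable_deriv uh).aestronglyMeasurable.restrict
  have hmdφ0 : AEStronglyMeasurable (deriv φ) μ0 :=
    (measurable_deriv φ).aestronglyMeasurable.restrict
  have hmdwh0 : AEStronglyMeasurable (deriv wh) μ0 :=
    (measurable_deriv wh).aestronglyMeasurable.restrict
  have hdu20 : Integrable (fun x => deriv u x ^ 2) μ0 :=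
    H10_dsq_int hL (le_refl 0) (le_refl L) huH
  have hduh20 : Integrable (fun x => deriv uh x ^ 2) μ0 :=
    H10_dsq_int hL (le_refl 0) (le_refl L) huhH
  have hdφ20 : Integrable (fun x => deriv φ x ^ 2) μ0 :=
    H10_dsq_int hL (le_refl 0) (le_refl L) hφH
  have hdwh20 : Integrable (fun x => deriv wh x ^ 2) μ0 :=
    H10_dsq_int hL (le_refl 0) (le_refl L) hwhH
  have hu20 : Integrable (fun x => u x ^ 2) μ0 := H10_sq_int hL (le_refl 0) (le_refl L) huH
  have huh20 : Integrable (fun x => uh x ^ 2) μ0 := H10_sq_int hL (le_refl 0) (le_refl L) huhH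
  have hmu0 : AEMeasurable u μ0 := H10_aem (le_refl 0) (le_refl L) huH
  have hmuh0 : AEMeasurable uh μ0 := H10_aem (le_refl 0) (le_refl L) huhH
  have hdud20 : Integrable (fun x => (deriv u x - deriv uh x) ^ 2) μ0 :=
    sq_sub_integrable hmdu0 hmduh0 hdu20 hduh20
  have hψ20 : Integrable (fun x => (deriv φ x - deriv wh x) ^ 2) μ0 :=
    sq_sub_integrable hmdφ0 hmdwh0 hdφ20 hdwh20
  have heH : e ∈ H10 L := by
    obtain ⟨huc, hu0, huL2, hud, huI1, huI2, huI3⟩ := huH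
    obtain ⟨hhc, hh0, hhL2, hhd, hhI1, hhI2, hhI3⟩ := huhH
    refine ⟨huc.sub hhc, by simp [he, hu0, hh0], by simp [he, huL2, hhL2],
      fun x hx => (hud x hx).sub (hhd x hx), ?_, ?_, ?_⟩
    · rw [intervalIntegrable_iff_integrableOn_Ioc_of_le hL.le]
      have base : IntegrableOn (fun x => deriv u x - deriv uh x) (Set.Ioc 0 L) volume :=
        ((intervalIntegrable_iff_integrableOn_Ioc_of_le hL.le).mp huI1).sub
          ((intervalIntegrable_iff_integrableOn_Ioc_of_le hL.le).mp hhI1)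
      exact base.congr (by filter_upwards [hdud_ae] with x hx using hx.symm)
    · rw [intervalIntegrable_iff_integrableOn_Ioc_of_le hL.le]
      refine hdud20.congr ?_
      filter_upwards [hdud_ae] with x hx
      rw [hx]
    · rw [intervalIntegrable_iff_integrableOn_Ioc_of_le hL.le]
      refine (sq_sub_integrable hmu0.aestronglyMeasurable hmuh0.aestronglyMeasurable
        hu20 huh20).congr ?_
      filter_upwards with x
      rw [he]
  -- abbreviations
  set X := Real.sqrt (∫ x in (0:ℝ)..L, (deriv u x - deriv uh x) ^ 2) with hXdef
  set Y := Real.sqrt (∫ x in (0:ℝ)..L, (deriv φ x - deriv wh x) ^ 2) with hYdef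
  have hX0 : 0 ≤ X := Real.sqrt_nonneg _
  have hY0 : 0 ≤ Y := Real.sqrt_nonneg _
  have hXμ : X = Real.sqrt (∫ x, (deriv u x - deriv uh x) ^ 2 ∂μ0) := by
    rw [hXdef, hIoc]
  have hYμ : Y = Real.sqrt (∫ x, (deriv φ x - deriv wh x) ^ 2 ∂μ0) := by
    rw [hYdef, hIoc]
  -- embedding bound for e
  have hEmb : ∀ x ∈ Set.Icc (0:ℝ) L, |u x - uh x| ≤ CΩ * X := by
    intro x hx
    have h1 := hemb e heH x hx
    have h2 : (∫ y in (0:ℝ)..L, (deriv e y) ^ 2)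
        = ∫ y in (0:ℝ)..L, (deriv u y - deriv uh y) ^ 2 := by
      rw [hIoc, hIoc]
      apply integral_congr_ae
      filter_upwards [hdud_ae] with y hy
      rw [hy]
    rw [h2] at h1
    have h3 : |u x - uh x| = |e x| := by rw [he]
    rw [h3]
    exact h1
  -- weighted norms
  set Nu := Real.sqrt (∫ x, deriv u x ^ 2 ∂μ0) with hNuDef
  set Nh := Real.sqrt (∫ x, deriv uh x ^ 2 ∂μ0) with hNhDef
  have hNu0 : 0 ≤ Nu := Real.sqrt_nonneg _
  have hNh0 : 0 ≤ Nh := Real.sqrt_nonneg _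
  -- sum over adjacent intervals
  have hadd : ∀ g : ℝ → ℝ, Integrable g μ0 →
      (∑ j ∈ Finset.range (m + 1), ∫ x in Set.Ioc (s j) (s (j + 1)), g x) = ∫ x, g x ∂μ0 := by
    intro g hg
    have hII : ∀ k < m + 1, IntervalIntegrable g volume (s k) (s (k + 1)) := by
      intro k hk
      rw [intervalIntegrable_iff_integrableOn_Ioc_of_le (hmono k (by omega)).le]
      exact hg.mono_measure (Measure.restrict_mono
        (Set.Ioc_subset_Ioc (hs_nonneg k (by omega)) (hs_le (k + 1) (by omega))) le_rfl)
    have h1 := intervalIntegral.sum_integral_adjacent_intervals hII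
    rw [hs0, hsm] at h1
    rw [← hIoc g, ← h1]
    apply Finset.sum_congr rfl
    intro j hj
    rw [Finset.mem_range] at hj
    rw [intervalIntegral.integral_of_le (hmono j (by omega)).le]
  -- a priori bound for `u`
  have hNuMu : Nu ≤ Mu := by
    have hform := hweak u ⟨huH.1, huH.2.1, huH.2.2.1, huH.2.2.2.1, huH.2.2.2.2.1,
      huH.2.2.2.2.2.1, huH.2.2.2.2.2.2⟩
    -- lower bound
    have hlow : κmin * (∫ x, deriv u x ^ 2 ∂μ0) ≤ formA m s κ u u u := by
      rw [formA, ← hadd _ hdu20, Finset.mul_sum]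
      apply Finset.sum_le_sum
      intro j hj
      rw [Finset.mem_range] at hj
      have hab := (hmono j (by omega)).le
      have ha := hs_nonneg j (by omega)
      have hbL := hs_le (j + 1) (by omega)
      rw [intervalIntegral.integral_of_le hab]
      set μab := volume.restrict (Set.Ioc (s j) (s (j + 1)))
      have hdu2j : Integrable (fun x => deriv u x ^ 2) μab := H10_dsq_int hL ha hbL huH
      have hint := perj_intC (κj := κ j) (κmin := κmin) (κmax := κmax) hL ha hbL huH
        (hκcont j) hκmin (hbd j) ((measurable_deriv u).aestronglyMeasurable.restrict) hdu2j
      rw [← MeasureTheory.integral_const_mul]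
      refine integral_mono_ae (hdu2j.const_mul κmin) hint ?_
      filter_upwards with x
      have h1 := (hbd j x (u x)).1
      calc κmin * deriv u x ^ 2 ≤ κ j x (u x) * deriv u x ^ 2 :=
            mul_le_mul_of_nonneg_right h1 (sq_nonneg _)
        _ = κ j x (u x) * deriv u x * deriv u x := by ring
    -- upper bound
    have hup : (∫ x in (0:ℝ)..L, f x * u x) ≤ Fn * (Real.sqrt L * CΩ * Nu) := by
      rw [hIoc]
      have hf0 : Integrable f μ0 := (intervalIntegrable_iff_integrableOn_Ioc_of_le hL.le).mp hf
      have hf20 : Integrable (fun x => f x ^ 2) μ0 :=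
        (intervalIntegrable_iff_integrableOn_Ioc_of_le hL.le).mp hf2
      have hfu : Integrable (fun x => f x * u x) μ0 :=
        mul_integrable hf0.aestronglyMeasurable hmu0.aestronglyMeasurable hf20 hu20
      have habsint : Integrable (fun x => |f x| * |u x|) μ0 := by
        refine (mul_integrable hf0.aestronglyMeasurable.norm
          hmu0.aestronglyMeasurable.norm ?_ ?_).congr ?_
        · simpa [Real.norm_eq_abs, sq_abs] using hf20
        · simpa [Real.norm_eq_abs, sq_abs] using hu20
        · filter_upwards with x
          simp [Real.norm_eq_abs]
      have h1 : (∫ x, f x * u x ∂μ0) ≤ ∫ x, |f x| * |u x| ∂μ0 := by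
        refine integral_mono_ae hfu habsint ?_
        filter_upwards with x
        calc f x * u x ≤ |f x * u x| := le_abs_self _
          _ = |f x| * |u x| := abs_mul _ _
      have h2 := cs_integral hf0.aestronglyMeasurable hmu0.aestronglyMeasurable hf20 hu20
      have h3 : Real.sqrt (∫ x, u x ^ 2 ∂μ0) ≤ Real.sqrt L * (CΩ * Nu) := by
        have hb : (∫ x, u x ^ 2 ∂μ0) ≤ L * (CΩ * Nu) ^ 2 := by
          have hconst : (∫ _x, (CΩ * Nu) ^ 2 ∂μ0) = L * (CΩ * Nu) ^ 2 := by
            rw [integral_const]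
            simp [hμ0, Real.volume_Ioc, ENNReal.toReal_ofReal hL.le, hL.le]
          rw [← hconst]
          refine integral_mono_ae hu20 (integrable_const _) ?_
          filter_upwards [ae_restrict_mem measurableSet_Ioc] with x hx
          have hxm : x ∈ Set.Icc (0:ℝ) L := Set.Ioc_subset_Icc_self hx
          have h4 := hemb u huH x hxm
          have h5 : |u x| ≤ CΩ * Nu := by
            rw [hNuDef, ← hIoc]
            exact h4
          calc u x ^ 2 = |u x| ^ 2 := (sq_abs _).symm
            _ ≤ (CΩ * Nu) ^ 2 :=
                pow_le_pow_left₀ (abs_nonneg _) h5 2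
        calc Real.sqrt (∫ x, u x ^ 2 ∂μ0) ≤ Real.sqrt (L * (CΩ * Nu) ^ 2) :=
              Real.sqrt_le_sqrt hb
          _ = Real.sqrt L * (CΩ * Nu) := by
              rw [Real.sqrt_mul hL.le, Real.sqrt_sq (by positivity)]
      calc (∫ x, f x * u x ∂μ0) ≤ ∫ x, |f x| * |u x| ∂μ0 := h1
        _ ≤ Real.sqrt (∫ x, f x ^ 2 ∂μ0) * Real.sqrt (∫ x, u x ^ 2 ∂μ0) := h2
        _ ≤ Real.sqrt (∫ x, f x ^ 2 ∂μ0) * (Real.sqrt L * (CΩ * Nu)) := by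
            apply mul_le_mul_of_nonneg_left h3 (Real.sqrt_nonneg _)
        _ = Fn * (Real.sqrt L * CΩ * Nu) := by
            rw [hFnDef, hIoc]
            ring
    have hNusq : Nu ^ 2 = ∫ x, deriv u x ^ 2 ∂μ0 := by
      rw [hNuDef]
      exact Real.sq_sqrt (integral_nonneg fun x => sq_nonneg _)
    have hkey : κmin * Nu ^ 2 ≤ Fn * (Real.sqrt L * CΩ * Nu) := by
      rw [hNusq]
      exact le_trans hlow (le_trans (le_of_eq hform) hup)
    rcases eq_or_lt_of_le hNu0 with h0 | h0
    · rw [← h0]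
      exact hMu0
    · have hMuκ : κmin * Mu = Real.sqrt L * CΩ * Fn := by
        rw [hMuDef]
        field_simp
      nlinarith [hkey, hMuκ, mul_pos hκmin h0]
  -- a priori bound for `uh`
  have hNhMh : Nh ≤ Mh := by
    have h1 : (∫ x in (0:ℝ)..L, (deriv uh x) ^ 2)
        ≤ (∫ x in (0:ℝ)..L, (uh x) ^ 2) + ∫ x in (0:ℝ)..L, (deriv uh x) ^ 2 := by
      have hnn : (0:ℝ) ≤ ∫ x in (0:ℝ)..L, (uh x) ^ 2 :=
        intervalIntegral.integral_nonneg hL.le (fun x _ => sq_nonneg (uh x))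
      linarith
    have h2 := Real.sqrt_le_sqrt h1
    have h3 : Nh = Real.sqrt (∫ x in (0:ℝ)..L, (deriv uh x) ^ 2) := by
      rw [hNhDef, hIoc]
    rw [h3]
    exact le_trans h2 hpri
  -- triangle inequality: X ≤ Nu + Nh
  have hXM : X ≤ Mu + Mh := by
    have h1 : X ≤ Nu + Nh := by
      rw [hXμ, hNuDef, hNhDef]
      exact l2_triangle hmdu0 hmduh0 hdu20 hduh20
    linarith
  -- the main identity
  have hstart := hadj e heH
  have hE2 : (∫ x in (0:ℝ)..L, (u x - uh x) ^ 2)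
      = formAbar m s κ uh u e φ + formBbar m s κ' uh u e φ := by
    rw [hstart]
    apply intervalIntegral.integral_congr
    intro x _
    simp only [he]
    ring
  -- split the forms
  set R : ℕ → ℝ := fun j => ∫ x in Set.Ioc (s j) (s (j + 1)),
    (∫ t in (0:ℝ)..1, κ j x (uh x + t * (u x - uh x)))
      * (deriv u x - deriv uh x) * (deriv φ x - deriv wh x) with hRdef
  set Rb : ℕ → ℝ := fun j => ∫ x in Set.Ioc (s j) (s (j + 1)),
    (∫ t in (0:ℝ)..1, κ' j x (uh x + t * (u x - uh x))
      * (deriv uh x + t * (deriv u x - deriv uh x)))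
      * (u x - uh x) * (deriv φ x - deriv wh x) with hRbdef
  have hjfacts : ∀ j ∈ Finset.range (m + 1),
      0 ≤ s j ∧ s j ≤ s (j + 1) ∧ s (j + 1) ≤ L := by
    intro j hj
    rw [Finset.mem_range] at hj
    exact ⟨hs_nonneg j (by omega), (hmono j (by omega)).le, hs_le (j + 1) (by omega)⟩
  have hsplitA : ∀ j ∈ Finset.range (m + 1),
      (∫ x in (s j)..(s (j + 1)), (∫ t in (0:ℝ)..1, κ j x (uh x + t * (u x - uh x)))
        * deriv e x * deriv φ x)
      = R j + ∫ x in (s j)..(s (j + 1)), (∫ t in (0:ℝ)..1, κ j x (uh x + t * (u x - uh x)))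
          * deriv e x * deriv wh x := by
    intro j hj
    obtain ⟨ha, hab, hbL⟩ := hjfacts j hj
    simp only [hRdef]
    exact perj_splitA (κj := κ j) hL ha hab hbL huH huhH hφH hwhH he (hκcont j)
      hκmin (hbd j)
  have hsplitB : ∀ j ∈ Finset.range (m + 1),
      (∫ x in (s j)..(s (j + 1)), (∫ t in (0:ℝ)..1, κ' j x (uh x + t * (u x - uh x))
        * (deriv uh x + t * (deriv u x - deriv uh x))) * e x * deriv φ x)
      = Rb j + ∫ x in (s j)..(s (j + 1)), (∫ t in (0:ℝ)..1, κ' j x (uh x + t * (u x - uh x))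
          * (deriv uh x + t * (deriv u x - deriv uh x))) * e x * deriv wh x := by
    intro j hj
    obtain ⟨ha, hab, hbL⟩ := hjfacts j hj
    simp only [hRbdef]
    exact perj_splitB (κj := κ j) (κj' := κ' j) hL ha hab hbL huH huhH hφH hwhH he
      (hκcont j) (hD2 j) (hD2bd j)
  have hident : ∀ j ∈ Finset.range (m + 1),
      (∫ x in (s j)..(s (j + 1)), (∫ t in (0:ℝ)..1, κ j x (uh x + t * (u x - uh x)))
        * deriv e x * deriv wh x)
      + (∫ x in (s j)..(s (j + 1)), (∫ t in (0:ℝ)..1, κ' j x (uh x + t * (u x - uh x))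
          * (deriv uh x + t * (deriv u x - deriv uh x))) * e x * deriv wh x)
      = (∫ x in (s j)..(s (j + 1)), κ j x (u x) * deriv u x * deriv wh x)
        - ∫ x in (s j)..(s (j + 1)), κ j x (uh x) * deriv uh x * deriv wh x := by
    intro j hj
    obtain ⟨ha, hab, hbL⟩ := hjfacts j hj
    exact perj_identity (κj := κ j) (κj' := κ' j) hL ha hab hbL huH huhH hwhH he
      (hκcont j) hκmin (hbd j) (hD2 j) (hD2bd j)
  -- Galerkin orthogonality
  have hGal : formA m s κ u u wh - formA m s κ uh uh wh = 0 := by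
    rw [hweak wh hwhH, hgal wh hwhV]
    ring
  -- assemble: E2 = Σ R + Σ Rb
  have hE2' : (∫ x in (0:ℝ)..L, (u x - uh x) ^ 2)
      = (∑ j ∈ Finset.range (m + 1), R j) + ∑ j ∈ Finset.range (m + 1), Rb j := by
    rw [hE2, formAbar, formBbar]
    rw [Finset.sum_congr rfl hsplitA, Finset.sum_congr rfl hsplitB]
    rw [Finset.sum_add_distrib, Finset.sum_add_distrib]
    have hzero : (∑ j ∈ Finset.range (m + 1),
        ∫ x in (s j)..(s (j + 1)), (∫ t in (0:ℝ)..1, κ j x (uh x + t * (u x - uh x)))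
          * deriv e x * deriv wh x)
      + (∑ j ∈ Finset.range (m + 1),
        ∫ x in (s j)..(s (j + 1)), (∫ t in (0:ℝ)..1, κ' j x (uh x + t * (u x - uh x))
          * (deriv uh x + t * (deriv u x - deriv uh x))) * e x * deriv wh x) = 0 := by
      rw [← Finset.sum_add_distrib]
      rw [Finset.sum_congr rfl hident]
      rw [Finset.sum_sub_distrib]
      have h1 : formA m s κ u u wh = ∑ j ∈ Finset.range (m + 1),
          ∫ x in (s j)..(s (j + 1)), κ j x (u x) * deriv u x * deriv wh x := rfl
      have h2 : formA m s κ uh uh wh = ∑ j ∈ Finset.range (m + 1),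
          ∫ x in (s j)..(s (j + 1)), κ j x (uh x) * deriv uh x * deriv wh x := rfl
      rw [← h1, ← h2]
      exact hGal
    linarith
  -- bounds
  have hG : Integrable (fun x => |deriv u x - deriv uh x| * |deriv φ x - deriv wh x|) μ0 := by
    have h1 : AEStronglyMeasurable (fun x => |deriv u x - deriv uh x|) μ0 := by
      have := (hmdu0.sub hmduh0).norm
      simpa [Real.norm_eq_abs] using this
    have h2 : AEStronglyMeasurable (fun x => |deriv φ x - deriv wh x|) μ0 := by
      have := (hmdφ0.sub hmdwh0).norm
      simpa [Real.norm_eq_abs] using this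
    exact mul_integrable h1 h2 (by simpa [sq_abs] using hdud20) (by simpa [sq_abs] using hψ20)
  have hH : Integrable (fun x => (|deriv uh x| + |deriv u x - deriv uh x|)
      * |deriv φ x - deriv wh x|) μ0 := by
    have h1 : AEStronglyMeasurable (fun x => |deriv uh x| + |deriv u x - deriv uh x|) μ0 := by
      have ha := hmduh0.norm
      have hb := (hmdu0.sub hmduh0).norm
      simpa [Real.norm_eq_abs, Pi.add_def] using ha.add hb
    have h2 : AEStronglyMeasurable (fun x => |deriv φ x - deriv wh x|) μ0 := by
      have := (hmdφ0.sub hmdwh0).norm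
      simpa [Real.norm_eq_abs] using this
    have h3 : Integrable (fun x => (|deriv uh x| + |deriv u x - deriv uh x|) ^ 2) μ0 := by
      refine Integrable.mono' ((hduh20.add hdud20).const_mul 2) (h1.pow 2) ?_
      filter_upwards with x
      rw [Real.norm_eq_abs, abs_of_nonneg (sq_nonneg _)]
      simp only [Pi.add_apply]
      nlinarith [sq_nonneg (|deriv uh x| - |deriv u x - deriv uh x|),
        sq_abs (deriv uh x), sq_abs (deriv u x - deriv uh x)]
    exact mul_integrable h1 h2 h3 (by simpa [sq_abs] using hψ20)
  have hRsum : (∑ j ∈ Finset.range (m + 1), R j)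
      ≤ κmax * ∫ x, |deriv u x - deriv uh x| * |deriv φ x - deriv wh x| ∂μ0 := by
    calc (∑ j ∈ Finset.range (m + 1), R j) ≤ ∑ j ∈ Finset.range (m + 1), |R j| :=
          Finset.sum_le_sum fun j _ => le_abs_self _
      _ ≤ ∑ j ∈ Finset.range (m + 1), κmax * ∫ x in Set.Ioc (s j) (s (j + 1)),
            |deriv u x - deriv uh x| * |deriv φ x - deriv wh x| := by
          apply Finset.sum_le_sum
          intro j hj
          obtain ⟨ha, hab, hbL⟩ := hjfacts j hj
          simp only [hRdef]
          exact perj_bound1 (κj := κ j) hL ha hab hbL huH huhH hφH hwhH (hκcont j)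
            hκmin (hbd j)
      _ = κmax * ∫ x, |deriv u x - deriv uh x| * |deriv φ x - deriv wh x| ∂μ0 := by
          rw [← Finset.mul_sum, hadd _ hG]
  have hRbsum : (∑ j ∈ Finset.range (m + 1), Rb j)
      ≤ K * (CΩ * X) * ∫ x, (|deriv uh x| + |deriv u x - deriv uh x|)
          * |deriv φ x - deriv wh x| ∂μ0 := by
    calc (∑ j ∈ Finset.range (m + 1), Rb j) ≤ ∑ j ∈ Finset.range (m + 1), |Rb j| :=
          Finset.sum_le_sum fun j _ => le_abs_self _
      _ ≤ ∑ j ∈ Finset.range (m + 1), K * (CΩ * X) * ∫ x in Set.Ioc (s j) (s (j + 1)),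
            (|deriv uh x| + |deriv u x - deriv uh x|) * |deriv φ x - deriv wh x| := by
          apply Finset.sum_le_sum
          intro j hj
          obtain ⟨ha, hab, hbL⟩ := hjfacts j hj
          simp only [hRbdef]
          exact perj_bound2 (κj := κ j) (κj' := κ' j) hL ha hab hbL huH huhH hφH hwhH
            (hκcont j) (hD2 j) (hD2bd j) (mul_nonneg hCΩ hX0) hEmb
      _ = K * (CΩ * X) * ∫ x, (|deriv uh x| + |deriv u x - deriv uh x|)
            * |deriv φ x - deriv wh x| ∂μ0 := by
          rw [← Finset.mul_sum, hadd _ hH]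
  -- Cauchy–Schwarz estimates
  have hGcs : (∫ x, |deriv u x - deriv uh x| * |deriv φ x - deriv wh x| ∂μ0) ≤ X * Y := by
    rw [hXμ, hYμ]
    exact cs_integral (hmdu0.sub hmduh0) (hmdφ0.sub hmdwh0) hdud20 hψ20
  have hHcs : (∫ x, (|deriv uh x| + |deriv u x - deriv uh x|)
      * |deriv φ x - deriv wh x| ∂μ0) ≤ Nh * Y + X * Y := by
    have hsplit : (∫ x, (|deriv uh x| + |deriv u x - deriv uh x|)
        * |deriv φ x - deriv wh x| ∂μ0)
        = (∫ x, |deriv uh x| * |deriv φ x - deriv wh x| ∂μ0)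
          + ∫ x, |deriv u x - deriv uh x| * |deriv φ x - deriv wh x| ∂μ0 := by
      have i1 : Integrable (fun x => |deriv uh x| * |deriv φ x - deriv wh x|) μ0 := by
        have ha : AEStronglyMeasurable (fun x => |deriv uh x|) μ0 := by
          have := hmduh0.norm
          simpa [Real.norm_eq_abs] using this
        have hb : AEStronglyMeasurable (fun x => |deriv φ x - deriv wh x|) μ0 := by
          have := (hmdφ0.sub hmdwh0).norm
          simpa [Real.norm_eq_abs] using this
        exact mul_integrable ha hb (by simpa [sq_abs] using hduh20)
          (by simpa [sq_abs] using hψ20)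
      rw [← integral_add i1 hG]
      apply integral_congr_ae
      filter_upwards with x
      ring
    rw [hsplit]
    have h1 : (∫ x, |deriv uh x| * |deriv φ x - deriv wh x| ∂μ0) ≤ Nh * Y := by
      rw [hNhDef, hYμ]
      exact cs_integral hmduh0 (hmdφ0.sub hmdwh0) hduh20 hψ20
    linarith [hGcs]
  -- finish
  rw [hE2']
  have hbig : (∑ j ∈ Finset.range (m + 1), R j) + ∑ j ∈ Finset.range (m + 1), Rb j
      ≤ κmax * (X * Y) + K * (CΩ * X) * (Nh * Y + X * Y) := by
    have h1 : (∑ j ∈ Finset.range (m + 1), R j) ≤ κmax * (X * Y) :=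
      le_trans hRsum (mul_le_mul_of_nonneg_left hGcs hκmax.le)
    have h2 : (∑ j ∈ Finset.range (m + 1), Rb j) ≤ K * (CΩ * X) * (Nh * Y + X * Y) :=
      le_trans hRbsum (mul_le_mul_of_nonneg_left hHcs
        (mul_nonneg hK (mul_nonneg hCΩ hX0)))
    linarith
  refine le_trans hbig ?_
  have hfin : κmax * (X * Y) + K * (CΩ * X) * (Nh * Y + X * Y)
      ≤ (κmax + K * CΩ * (Mh + (Mu + Mh)) + 1) * Y * X := by
    have hXY : 0 ≤ X * Y := mul_nonneg hX0 hY0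
    have hKCΩ : 0 ≤ K * CΩ := mul_nonneg hK hCΩ
    nlinarith [mul_nonneg hKCΩ (mul_nonneg hXY (sub_nonneg.mpr hNhMh)),
      mul_nonneg hKCΩ (mul_nonneg hY0 (mul_nonneg hX0 hX0)),
      mul_nonneg hKCΩ (mul_nonneg hY0 (mul_nonneg (sub_nonneg.mpr hXM) hX0)),
      mul_nonneg hKCΩ (mul_nonneg hY0 (mul_nonneg (sub_nonneg.mpr hXM)
        (sub_nonneg.mpr hNhMh)))]
  exact hfin
end
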